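/- arXiv:1412.5350 — 5 statements merged into one kernel-verified Lean document; each statement's English description precedes it below -/
import Mathlib

section
/- Let w ⊆ ℝ^d be a closed set, let G be a locally concave function on w with values in ℝ ∪ {+∞}, and let M be a w-martingale. Then the function n ↦ E G(M_n) is non-increasing in n. -/
open Set MeasureTheory
open scoped ENNReal

noncomputable section

/-- `Euc d` is the Euclidean space `ℝ^d`. -/
abbrev Euc (d : ℕ) := EuclideanSpace ℝ (Fin d)

/-- The fixed boundary of `w`: the set of locally extremal points of `w`,
i.e. the points of `∂w` that do not lie on any open segment contained in `cl w`. -/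
def fixedBoundary {d : ℕ} (w : Set (Euc d)) : Set (Euc d) :=
  {x | x ∈ frontier w ∧ ∀ y z : Euc d, y ≠ z → openSegment ℝ y z ⊆ closure w →
      x ∉ openSegment ℝ y z}

/-- The free boundary of `w`. -/
def freeBoundary {d : ℕ} (w : Set (Euc d)) : Set (Euc d) := frontier w \ fixedBoundary w

/-- A function `G : w → ℝ ∪ {+∞}` is locally concave on `w` if its restriction to every
segment contained in `w` is concave. -/
def LocallyConcaveOn {d : ℕ} (w : Set (Euc d)) (G : Euc d → EReal) : Prop :=
  ∀ x ∈ w, ∀ y ∈ w, segment ℝ x y ⊆ w → ∀ a b : ℝ, 0 ≤ a → 0 ≤ b → a + b = 1 →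
    (a : EReal) * G x + (b : EReal) * G y ≤ G (a • x + b • y)

/-- The class `Λ_{w,f}` of locally concave functions on `w` majorizing `f` on the
fixed boundary of `w`. -/
def Lambda {d : ℕ} (w : Set (Euc d)) (f : Euc d → EReal) : Set (Euc d → EReal) :=
  {G | LocallyConcaveOn w G ∧ ∀ x ∈ fixedBoundary w, f x ≤ G x}

/-- The minimal locally concave function `𝔅_{w,f}`, the pointwise infimum of `Λ_{w,f}`. -/
def minLocConc {d : ℕ} (w : Set (Euc d)) (f : Euc d → EReal) (x : Euc d) : EReal :=
  ⨅ G ∈ Lambda w f, G x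

/-- A point `x` is an exposed point of a set `C ⊆ ℝ^d` if there is an affine
hyperplane whose intersection with `C` is exactly `{x}`. -/
def IsExposedPoint {d : ℕ} (C : Set (Euc d)) (x : Euc d) : Prop :=
  ∃ (a : Euc d) (c : ℝ), a ≠ 0 ∧ {y : Euc d | inner ℝ a y = c} ∩ C = {x}

/-- A convex set is strictly convex if every point of its boundary is an exposed point
of its closure. -/
def StrictlyConvexSet {d : ℕ} (C : Set (Euc d)) : Prop :=
  Convex ℝ C ∧ ∀ x ∈ frontier C, IsExposedPoint (closure C) x

/-- The nonnegative part of an extended real, as an `ℝ≥0∞`-valued quantity. -/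
def erealToENNReal (y : EReal) : ℝ≥0∞ := if y = ⊤ then ⊤ else ENNReal.ofReal y.toReal

/-- Expectation of an `EReal`-valued random variable: the difference of the (unsigned)
integrals of its positive and negative parts. -/
def erealExp {α : Type} [MeasurableSpace α] (μ : MeasureTheory.Measure α)
    (Y : α → EReal) : EReal :=
  ((∫⁻ a, erealToENNReal (Y a) ∂μ : ℝ≥0∞) : EReal) -
    ((∫⁻ a, erealToENNReal (-(Y a)) ∂μ : ℝ≥0∞) : EReal)

open MeasureTheory in
/-- The data `(μ, F, M, M∞)` is a `w`-martingale: `μ` is a probability measure, each `F n`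
is a finite σ-algebra, `F 0` is trivial, `M n` is `F n`-measurable, `M∞` is integrable with
values in the fixed boundary of `w`, `M n = E(M∞ | F n)`, and for every `n` and every atom
`σ` of `F n`, the convex hull of `M_n(σ)` together with `{M_{n+1}(z) : z ∈ σ}` lies in `w`. -/
def IsWMart {d : ℕ} {α : Type} [mα : MeasurableSpace α] (μ : Measure α)
    (F : Filtration ℕ mα) (M : ℕ → α → Euc d) (Minf : α → Euc d)
    (w : Set (Euc d)) : Prop :=
  IsProbabilityMeasure μ ∧
  (∀ n, {s : Set α | MeasurableSet[F n] s}.Finite) ∧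
  ((F 0 : MeasurableSpace α) = ⊥) ∧
  (∀ n, Measurable[F n] (M n)) ∧
  Integrable Minf μ ∧
  (∀ a, Minf a ∈ fixedBoundary w) ∧
  (∀ n, M n =ᵐ[μ] μ[Minf | F n]) ∧
  (∀ n (σ : Set α), MeasurableSet[F n] σ → σ.Nonempty →
    (∀ t : Set α, MeasurableSet[F n] t → t ⊆ σ → t = ∅ ∨ t = σ) →
    ∀ a ∈ σ, convexHull ℝ ({M n a} ∪ (M (n+1)) '' σ) ⊆ w)

/-- A bundled `w`-martingale. -/
structure WMartingale {d : ℕ} (w : Set (Euc d)) : Type 1 where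
  α : Type
  mα : MeasurableSpace α
  μ : @MeasureTheory.Measure α mα
  F : @MeasureTheory.Filtration α ℕ _ mα
  M : ℕ → α → Euc d
  Minf : α → Euc d
  isWMart : @IsWMart d α mα μ F M Minf w

/-- A `w`-martingale is simple if `M n = M∞` for some `n`; it starts at `x` if `M 0 ≡ x`.
The set `w` is strongly martingale connected if every `x ∈ w` is the start of a simple
`w`-martingale. -/
def StronglyMartingaleConnected {d : ℕ} (w : Set (Euc d)) : Prop :=
  ∀ x ∈ w, ∃ X : WMartingale w, (∃ n, X.M n = X.Minf) ∧ (∀ a, X.M 0 a = x)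

/-- The martingale Bellman function `ℬ_{w,f}(x) = sup {E f(M∞) : M₀ = x, M ∈ 𝓜_w}`. -/
def martBellman {d : ℕ} (w : Set (Euc d)) (f : Euc d → ℝ) (x : Euc d) : EReal :=
  ⨆ (X : WMartingale w) (_ : ∀ a, X.M 0 a = x),
    @erealExp X.α X.mα X.μ (fun a => ((f (X.Minf a) : ℝ) : EReal))


/-! ### Auxiliary material -/

section Atoms

variable {α : Type}

/-- The atom of a σ-algebra containing a point. -/
def matom (m' : MeasurableSpace α) (a : α) : Set α :=
  ⋂₀ {s | MeasurableSet[m'] s ∧ a ∈ s}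

variable {m' : MeasurableSpace α} (hfin : {s : Set α | MeasurableSet[m'] s}.Finite)

lemma matom_mem (a : α) : a ∈ matom m' a := fun _ hs => hs.2

lemma matom_subset {a : α} {s : Set α} (hs : MeasurableSet[m'] s) (ha : a ∈ s) :
    matom m' a ⊆ s := sInter_subset_of_mem ⟨hs, ha⟩

include hfin in
lemma matom_measurable (a : α) : MeasurableSet[m'] (matom m' a) := by
  have h1 : {s | MeasurableSet[m'] s ∧ a ∈ s}.Finite :=
    hfin.subset (fun s hs => hs.1)
  exact Set.Finite.measurableSet_sInter h1 (fun s hs => hs.1)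

include hfin in
lemma matom_eq_of_mem {a b : α} (hb : b ∈ matom m' a) : matom m' b = matom m' a := by
  have hba : matom m' b ⊆ matom m' a := matom_subset (matom_measurable hfin a) hb
  have hab : a ∈ matom m' b := by
    by_contra hna
    have ht : MeasurableSet[m'] (matom m' a \ matom m' b) :=
      (matom_measurable hfin a).diff (matom_measurable hfin b)
    have : matom m' a ⊆ matom m' a \ matom m' b :=
      matom_subset ht ⟨matom_mem a, hna⟩
    exact (this hb).2 (matom_mem b)
  exact Subset.antisymm hba (matom_subset (matom_measurable hfin b) hab)

include hfin in
/-- An atom is minimal: every nonempty measurable subset equals it. -/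
lemma matom_min {a : α} {t : Set α} (ht : MeasurableSet[m'] t) (hsub : t ⊆ matom m' a)
    (hne : t.Nonempty) : t = matom m' a := by
  obtain ⟨b, hb⟩ := hne
  have hba := matom_eq_of_mem hfin (hsub hb)
  have : matom m' b ⊆ t := matom_subset ht hb
  rw [hba] at this
  exact Subset.antisymm hsub this

/-- A measurable function into a space with measurable singletons is constant on atoms. -/
lemma matom_const {β : Type*} [MeasurableSpace β] [MeasurableSingletonClass β]
    {f : α → β} (hf : Measurable[m'] f) {a b : α} (hb : b ∈ matom m' a) : f b = f a := by
  have hs : MeasurableSet[m'] (f ⁻¹' {f a}) := hf (measurableSet_singleton _)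
  have := matom_subset hs rfl hb
  simpa using this

include hfin in
lemma matom_finite : {t : Set α | ∃ a, t = matom m' a}.Finite := by
  apply hfin.subset
  rintro t ⟨a, rfl⟩
  exact matom_measurable hfin a

include hfin in
lemma matom_disjoint {a b : α} (h : matom m' a ≠ matom m' b) :
    Disjoint (matom m' a) (matom m' b) := by
  rw [Set.disjoint_left]
  intro x hxa hxb
  exact h ((matom_eq_of_mem hfin hxa).symm.trans (matom_eq_of_mem hfin hxb))

/-- Atoms of a finer σ-algebra are smaller. -/
lemma matom_mono {m₁ m₂ : MeasurableSpace α} (h : m₁ ≤ m₂) (a : α) :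
    matom m₂ a ⊆ matom m₁ a := by
  intro x hx s hs
  exact hx s ⟨h s hs.1, hs.2⟩

end Atoms

namespace ERX

open scoped NNReal

lemma coe_fin {x : ℝ≥0∞} (hx : x ≠ ⊤) : (↑x : EReal) = ((x.toReal : ℝ) : EReal) := by
  lift x to ℝ≥0 using hx
  rw [EReal.coe_nnreal_eq_coe_real]
  simp

lemma sub_split (a b c d : ℝ≥0∞) (h : a = 0 ∨ c = 0) :
    ((↑(a+b) : EReal) - ↑(c+d)) = ((↑a : EReal) - ↑c) + ((↑b : EReal) - ↑d) := by
  rcases h with rfl | rfl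
  · simp only [zero_add, EReal.coe_ennreal_zero, sub_zero]
    rcases eq_or_ne c ⊤ with rfl | hc
    · simp [EReal.coe_ennreal_add, EReal.coe_ennreal_top, zero_sub, sub_eq_add_neg]
    rcases eq_or_ne d ⊤ with rfl | hd
    · rcases eq_or_ne b ⊤ with rfl | hb
      · simp [EReal.coe_ennreal_add, EReal.coe_ennreal_top, sub_eq_add_neg, coe_fin hc]
      · simp [EReal.coe_ennreal_add, EReal.coe_ennreal_top, sub_eq_add_neg,
          coe_fin hc, coe_fin hb]
    rcases eq_or_ne b ⊤ with rfl | hb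
    · simp [EReal.coe_ennreal_add, EReal.coe_ennreal_top, coe_fin hc, coe_fin hd,
        sub_eq_add_neg, ← EReal.coe_add, ← EReal.coe_neg, EReal.top_add_coe, EReal.coe_add_top,
        EReal.add_top_of_ne_bot (EReal.coe_ne_bot _)]
    · rw [EReal.coe_ennreal_add, coe_fin hb, coe_fin hc, coe_fin hd]
      norm_cast
      ring
  · simp only [zero_add, EReal.coe_ennreal_zero, zero_sub]
    rcases eq_or_ne d ⊤ with rfl | hd
    · rcases eq_or_ne b ⊤ with rfl | hb
      · simp [EReal.coe_ennreal_add, EReal.coe_ennreal_top, sub_eq_add_neg]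
      · simp [EReal.coe_ennreal_add, EReal.coe_ennreal_top, sub_eq_add_neg, coe_fin hb]
    rcases eq_or_ne a ⊤ with rfl | ha
    · rcases eq_or_ne b ⊤ with rfl | hb
      · simp [EReal.coe_ennreal_add, EReal.coe_ennreal_top, sub_eq_add_neg,
          coe_fin hd, ← EReal.coe_neg]
      · simp [EReal.coe_ennreal_add, EReal.coe_ennreal_top, coe_fin hb, coe_fin hd,
          sub_eq_add_neg, ← EReal.coe_neg, EReal.coe_add_top, EReal.top_add_coe]
    rcases eq_or_ne b ⊤ with rfl | hb
    · simp [EReal.coe_ennreal_add, EReal.coe_ennreal_top, coe_fin ha, coe_fin hd,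
        sub_eq_add_neg, ← EReal.coe_neg, EReal.coe_add_top, EReal.top_add_coe,
        EReal.add_top_of_ne_bot (EReal.coe_ne_bot _)]
    · rw [EReal.coe_ennreal_add, coe_fin hb, coe_fin ha, coe_fin hd]
      norm_cast
      ring

lemma sub_sum {ι : Type*} (s : Finset ι) (p n : ι → ℝ≥0∞)
    (h : ∀ i ∈ s, p i = 0 ∨ n i = 0) :
    ((↑(∑ i ∈ s, p i) : EReal) - ↑(∑ i ∈ s, n i)) =
      ∑ i ∈ s, ((↑(p i) : EReal) - ↑(n i)) := by
  classical
  induction s using Finset.induction_on with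
  | empty => simp
  | insert _ _ hj ih =>
    rename_i j t
    rw [Finset.sum_insert hj, Finset.sum_insert hj, Finset.sum_insert hj,
      sub_split _ _ _ _ (h j (Finset.mem_insert_self j t)),
      ih (fun i hi => h i (Finset.mem_insert_of_mem hi))]

lemma pos_neg (v : EReal) : erealToENNReal v = 0 ∨ erealToENNReal (-v) = 0 := by
  induction v using EReal.rec with
  | bot => left; simp [erealToENNReal]
  | top => right; simp [erealToENNReal]
  | coe x =>
    rcases le_total x 0 with h | h
    · left; simp [erealToENNReal, EReal.toReal_coe, ENNReal.ofReal_eq_zero.2 h]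
    · right
      simp only [erealToENNReal, ← EReal.coe_neg]
      simp [ENNReal.ofReal_eq_zero.2 (neg_nonpos.2 h)]

lemma piece {μs : ℝ≥0∞} (hμs : μs ≠ ⊤) (v : EReal) :
    ((↑(μs * erealToENNReal v) : EReal) - ↑(μs * erealToENNReal (-v))) =
      ((μs.toReal : ℝ) : EReal) * v := by
  induction v using EReal.rec with
  | bot =>
    rcases eq_or_ne μs 0 with rfl | h0
    · simp [erealToENNReal]
    · have hp : 0 < μs.toReal := ENNReal.toReal_pos h0 hμs
      simp [erealToENNReal, ENNReal.mul_top h0, EReal.coe_mul_bot_of_pos hp, sub_eq_add_neg]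
  | top =>
    rcases eq_or_ne μs 0 with rfl | h0
    · simp [erealToENNReal]
    · have hp : 0 < μs.toReal := ENNReal.toReal_pos h0 hμs
      simp [erealToENNReal, ENNReal.mul_top h0, EReal.coe_mul_top_of_pos hp, sub_eq_add_neg]
  | coe x =>
    have h1 : erealToENNReal (x : EReal) = ENNReal.ofReal x := by
      simp [erealToENNReal]
    have h2 : erealToENNReal (-(x : EReal)) = ENNReal.ofReal (-x) := by
      rw [← EReal.coe_neg]
      simp [erealToENNReal]
    rw [h1, h2, coe_fin (ENNReal.mul_ne_top hμs ENNReal.ofReal_ne_top),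
      coe_fin (ENNReal.mul_ne_top hμs ENNReal.ofReal_ne_top)]
    rw [ENNReal.toReal_mul, ENNReal.toReal_mul]
    rcases le_total 0 x with hx | hx
    · rw [ENNReal.ofReal_eq_zero.2 (neg_nonpos.2 hx), ENNReal.toReal_ofReal hx]
      simp only [ENNReal.toReal_zero, mul_zero, EReal.coe_zero, sub_zero]
      norm_cast
    · rw [ENNReal.ofReal_eq_zero.2 hx, ENNReal.toReal_ofReal (neg_nonneg.2 hx)]
      simp only [ENNReal.toReal_zero, mul_zero, EReal.coe_zero, zero_sub]
      norm_cast
      ring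

lemma erealExp_partition {α : Type} [mα : MeasurableSpace α] (μ : Measure α)
    [IsFiniteMeasure μ] {ι : Type*} (P : Finset ι) (S : ι → Set α)
    (hmeas : ∀ i ∈ P, MeasurableSet (S i)) (hdis : (P : Set ι).PairwiseDisjoint S)
    (hcov : ⋃ i ∈ P, S i = univ) (f : α → EReal) (v : ι → EReal)
    (hf : ∀ i ∈ P, ∀ a ∈ S i, f a = v i) :
    erealExp μ f = ∑ i ∈ P, ((μ (S i)).toReal : EReal) * v i := by
  have key : ∀ (g : α → EReal) (u : ι → EReal), (∀ i ∈ P, ∀ a ∈ S i, g a = u i) →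
      ∫⁻ a, erealToENNReal (g a) ∂μ = ∑ i ∈ P, μ (S i) * erealToENNReal (u i) := by
    intro g u hg
    rw [← setLIntegral_univ, ← hcov, lintegral_biUnion_finset hdis hmeas]
    refine Finset.sum_congr rfl fun i hi => ?_
    rw [setLIntegral_congr_fun (hmeas i hi)
      (fun a ha => by rw [hg i hi a ha]),
      setLIntegral_const, mul_comm]
  have hpos := key f v hf
  have hneg := key (fun a => -(f a)) (fun i => -(v i))
    (fun i hi a ha => by simp only [hf i hi a ha])
  rw [erealExp, hpos, hneg, sub_sum _ _ _ (fun i hi => by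
    rcases pos_neg (v i) with h | h
    · exact Or.inl (by rw [h, mul_zero])
    · exact Or.inr (by rw [h, mul_zero]))]
  refine Finset.sum_congr rfl fun i hi => piece (measure_ne_top μ _) (v i)

lemma coe_mul_add {r : ℝ} (hr : 0 ≤ r) (p q : EReal) :
    (r : EReal) * (p + q) = (r : EReal) * p + (r : EReal) * q := by
  rcases hr.eq_or_lt with rfl | hr'
  · simp
  · induction p using EReal.rec <;> induction q using EReal.rec <;>
      (try (norm_cast; ring)) <;>
      simp [EReal.coe_mul_top_of_pos hr', EReal.coe_mul_bot_of_pos hr',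
        EReal.bot_add, EReal.add_bot, EReal.top_add_coe, EReal.coe_add_top, EReal.top_add_top,
        ← EReal.coe_mul]

lemma coe_mul_sum {ι : Type*} {r : ℝ} (hr : 0 ≤ r) (s : Finset ι) (f : ι → EReal) :
    (r : EReal) * ∑ i ∈ s, f i = ∑ i ∈ s, (r : EReal) * f i := by
  classical
  induction s using Finset.induction_on with
  | empty => simp
  | insert _ _ hj ih =>
    rename_i j t
    rw [Finset.sum_insert hj, Finset.sum_insert hj, coe_mul_add hr, ih]

lemma jensen {d : ℕ} {w : Set (Euc d)} {G : Euc d → EReal} (hG : LocallyConcaveOn w G)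
    {K : Set (Euc d)} (hK : Convex ℝ K) (hKw : K ⊆ w) {ι : Type*} (s : Finset ι) :
    ∀ (c : ι → ℝ) (x : ι → Euc d), (∀ i ∈ s, 0 ≤ c i) → (∑ i ∈ s, c i) = 1 →
    (∀ i ∈ s, x i ∈ K) →
    ∑ i ∈ s, (c i : EReal) * G (x i) ≤ G (∑ i ∈ s, c i • x i) := by
  classical
  induction s using Finset.induction_on with
  | empty => intro c x _ hsum _; simp at hsum
  | insert _ _ hj ih =>
    rename_i j t
    intro c x hc hsum hx
    rw [Finset.sum_insert hj] at hsum ⊢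
    rw [Finset.sum_insert hj]
    have hcj : 0 ≤ c j := hc j (Finset.mem_insert_self j t)
    have hct : ∀ i ∈ t, 0 ≤ c i := fun i hi => hc i (Finset.mem_insert_of_mem hi)
    have hxt : ∀ i ∈ t, x i ∈ K := fun i hi => hx i (Finset.mem_insert_of_mem hi)
    have hxj : x j ∈ K := hx j (Finset.mem_insert_self j t)
    have hbnn : 0 ≤ ∑ i ∈ t, c i := Finset.sum_nonneg hct
    rcases hbnn.eq_or_lt with hb0 | hbpos
    · have hz : ∀ i ∈ t, c i = 0 := by
        intro i hi
        exact (Finset.sum_eq_zero_iff_of_nonneg hct).1 hb0.symm i hi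
      have hcj1 : c j = 1 := by rw [← hb0] at hsum; linarith
      have h1 : ∑ i ∈ t, (c i : EReal) * G (x i) = 0 :=
        Finset.sum_eq_zero fun i hi => by rw [hz i hi]; simp
      have h2 : ∑ i ∈ t, c i • x i = 0 :=
        Finset.sum_eq_zero fun i hi => by rw [hz i hi]; simp
      rw [h1, h2, hcj1, add_zero, add_zero]
      simp
    · set b := ∑ i ∈ t, c i with hbdef
      have hab : c j + b = 1 := hsum
      set c' : ι → ℝ := fun i => c i / b with hc'def
      have hc'nn : ∀ i ∈ t, 0 ≤ c' i := fun i hi => div_nonneg (hct i hi) hbnn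
      have hc'sum : ∑ i ∈ t, c' i = 1 := by
        rw [hc'def]
        rw [← Finset.sum_div]
        exact div_self hbpos.ne'
      set y := ∑ i ∈ t, c' i • x i with hydef
      have hy : y ∈ K := hK.sum_mem hc'nn hc'sum hxt
      have hIH := ih c' x hc'nn hc'sum hxt
      have hseg : segment ℝ (x j) y ⊆ w := (hK.segment_subset hxj hy).trans hKw
      have key := hG (x j) (hKw hxj) y (hKw hy) hseg (c j) b hcj hbnn hab
      have hby : b • y = ∑ i ∈ t, c i • x i := by
        rw [hydef, Finset.smul_sum]
        refine Finset.sum_congr rfl fun i hi => ?_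
        rw [smul_smul, hc'def, mul_div_cancel₀ _ hbpos.ne']
      have hlhs : ∑ i ∈ t, (c i : EReal) * G (x i) ≤ (b : EReal) * G y := by
        calc ∑ i ∈ t, (c i : EReal) * G (x i)
            = ∑ i ∈ t, (b : EReal) * ((c' i : EReal) * G (x i)) := by
              refine Finset.sum_congr rfl fun i hi => ?_
              rw [← mul_assoc, ← EReal.coe_mul, hc'def, mul_div_cancel₀ _ hbpos.ne']
          _ = (b : EReal) * ∑ i ∈ t, (c' i : EReal) * G (x i) :=
              (coe_mul_sum hbnn t _).symm
          _ ≤ (b : EReal) * G y := mul_le_mul_of_nonneg_left hIH (by exact_mod_cast hbnn)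
      calc (c j : EReal) * G (x j) + ∑ i ∈ t, (c i : EReal) * G (x i)
          ≤ (c j : EReal) * G (x j) + (b : EReal) * G y := add_le_add_right hlhs _
        _ ≤ G (c j • x j + b • y) := key
        _ = G (c j • x j + ∑ i ∈ t, c i • x i) := by rw [hby]

end ERX

open MeasureTheory in
lemma mainStep {d : ℕ} {w : Set (Euc d)} {G : Euc d → EReal} (hG : LocallyConcaveOn w G)
    {α : Type} [mα : MeasurableSpace α] {μ : Measure α} {F : Filtration ℕ mα}
    {M : ℕ → α → Euc d} {Minf : α → Euc d} (h : IsWMart μ F M Minf w) (n : ℕ) :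
    erealExp μ (fun a => G (M (n+1) a)) ≤ erealExp μ (fun a => G (M n a)) := by
  classical
  obtain ⟨hprob, hfin, hbot, hmeasM, hMint, hMinfmem, hcond, hconv⟩ := h
  haveI := hprob
  have hane : Nonempty α := by
    by_contra hne
    have hu : (univ : Set α) = ∅ := by
      ext a; exact absurd ⟨a⟩ hne
    have h1 : (1 : ℝ≥0∞) = 0 := by
      rw [← measure_univ (μ := μ), hu, measure_empty]
    simp at h1
  haveI := hane
  set pick : Set α → α := fun s => if hs : s.Nonempty then hs.some else Classical.arbitrary α
    with hpickdef
  have hpick : ∀ s : Set α, s.Nonempty → pick s ∈ s := by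
    intro s hs
    simp only [hpickdef, dif_pos hs]
    exact hs.some_mem
  have hfin₁ : {s : Set α | MeasurableSet[F n] s}.Finite := hfin n
  have hfin₂ : {s : Set α | MeasurableSet[F (n+1)] s}.Finite := hfin (n+1)
  have hm₁ : (F n : MeasurableSpace α) ≤ mα := F.le n
  have hm₂ : (F (n+1) : MeasurableSpace α) ≤ mα := F.le (n+1)
  have hm₁₂ : (F n : MeasurableSpace α) ≤ F (n+1) := F.mono (Nat.le_succ n)
  -- the atoms
  set A : Finset (Set α) := (matom_finite hfin₂).toFinset with hAdef
  set B : Finset (Set α) := (matom_finite hfin₁).toFinset with hBdef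
  have hAmem : ∀ t : Set α, t ∈ A ↔ ∃ a, t = matom (F (n+1)) a := by
    intro t; rw [hAdef, Set.Finite.mem_toFinset]; rfl
  have hBmem : ∀ t : Set α, t ∈ B ↔ ∃ a, t = matom (F n) a := by
    intro t; rw [hBdef, Set.Finite.mem_toFinset]; rfl
  have hAne : ∀ t ∈ A, t.Nonempty := by
    intro t ht; obtain ⟨a, rfl⟩ := (hAmem t).1 ht; exact ⟨a, matom_mem a⟩
  have hBne : ∀ t ∈ B, t.Nonempty := by
    intro t ht; obtain ⟨a, rfl⟩ := (hBmem t).1 ht; exact ⟨a, matom_mem a⟩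
  have hAatom : ∀ t ∈ A, t = matom (F (n+1)) (pick t) := by
    intro t ht
    obtain ⟨a, rfl⟩ := (hAmem t).1 ht
    exact (matom_eq_of_mem hfin₂ (hpick _ ⟨a, matom_mem a⟩)).symm
  have hBatom : ∀ t ∈ B, t = matom (F n) (pick t) := by
    intro t ht
    obtain ⟨a, rfl⟩ := (hBmem t).1 ht
    exact (matom_eq_of_mem hfin₁ (hpick _ ⟨a, matom_mem a⟩)).symm
  have hAmeas : ∀ t ∈ A, MeasurableSet t := by
    intro t ht; obtain ⟨a, rfl⟩ := (hAmem t).1 ht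
    exact hm₂ _ (matom_measurable hfin₂ a)
  have hBmeas : ∀ t ∈ B, MeasurableSet t := by
    intro t ht; obtain ⟨a, rfl⟩ := (hBmem t).1 ht
    exact hm₁ _ (matom_measurable hfin₁ a)
  have hAdis : (↑A : Set (Set α)).PairwiseDisjoint (id : Set α → Set α) := by
    intro t ht t' ht' hne
    obtain ⟨a, rfl⟩ := (hAmem t).1 ht
    obtain ⟨b, rfl⟩ := (hAmem t').1 ht'
    exact matom_disjoint hfin₂ hne
  have hBdis : (↑B : Set (Set α)).PairwiseDisjoint (id : Set α → Set α) := by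
    intro t ht t' ht' hne
    obtain ⟨a, rfl⟩ := (hBmem t).1 ht
    obtain ⟨b, rfl⟩ := (hBmem t').1 ht'
    exact matom_disjoint hfin₁ hne
  have hAcov : ⋃ t ∈ A, (id t : Set α) = univ := by
    refine eq_univ_of_forall fun a => ?_
    exact mem_biUnion ((hAmem _).2 ⟨a, rfl⟩) (matom_mem a)
  have hBcov : ⋃ t ∈ B, (id t : Set α) = univ := by
    refine eq_univ_of_forall fun a => ?_
    exact mem_biUnion ((hBmem _).2 ⟨a, rfl⟩) (matom_mem a)
  -- values on atoms
  set v₂ : Set α → EReal := fun t => G (M (n+1) (pick t)) with hv₂def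
  set v₁ : Set α → EReal := fun t => G (M n (pick t)) with hv₁def
  have hv₂ : ∀ t ∈ A, ∀ a ∈ (id t : Set α), G (M (n+1) a) = v₂ t := by
    intro t ht a ha
    rw [hv₂def]
    have h1 := hAatom t ht
    rw [h1] at ha
    rw [matom_const (hmeasM (n+1)) ha]
  have hv₁ : ∀ t ∈ B, ∀ a ∈ (id t : Set α), G (M n a) = v₁ t := by
    intro t ht a ha
    rw [hv₁def]
    have h1 := hBatom t ht
    rw [h1] at ha
    rw [matom_const (hmeasM n) ha]
  have E₂ := ERX.erealExp_partition μ A (id : Set α → Set α) hAmeas hAdis hAcov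
    (fun a => G (M (n+1) a)) v₂ hv₂
  have E₁ := ERX.erealExp_partition μ B (id : Set α → Set α) hBmeas hBdis hBcov
    (fun a => G (M n a)) v₁ hv₁
  rw [E₂, E₁]
  -- group the atoms of `F (n+1)` by the atoms of `F n` containing them
  set g : Set α → Set α := fun t => matom (F n) (pick t) with hgdef
  have hmaps : ∀ t ∈ A, g t ∈ B := fun t _ => (hBmem _).2 ⟨pick t, rfl⟩
  rw [← Finset.sum_fiberwise_of_maps_to hmaps
    (fun t => ((μ (id t)).toReal : EReal) * v₂ t)]
  refine Finset.sum_le_sum fun σ hσ => ?_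
  -- now work on a single atom σ of `F n`
  have hσne : σ.Nonempty := hBne σ hσ
  have ha₁ : pick σ ∈ σ := hpick σ hσne
  set x₀ := M n (pick σ) with hx₀def
  have hσatom := hBatom σ hσ
  have hσm₁ : MeasurableSet[F n] σ := by
    rw [hσatom]; exact matom_measurable hfin₁ (pick σ)
  have hσm₂ : MeasurableSet[F (n+1)] σ := hm₁₂ _ hσm₁
  have hσmα : MeasurableSet σ := hm₁ _ hσm₁
  set Fib : Finset (Set α) := A.filter (fun t => g t = σ) with hFibdef
  have hFibsub : ∀ t ∈ Fib, t ⊆ σ := by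
    intro t ht
    rw [hFibdef, Finset.mem_filter] at ht
    have h1 : t ⊆ g t := by
      have h2 : g t = matom (F n) (pick t) := rfl
      rw [h2]
      nth_rewrite 1 [hAatom t ht.1]
      exact matom_mono hm₁₂ (pick t)
    rw [ht.2] at h1
    exact h1
  have hFibmeas : ∀ t ∈ Fib, MeasurableSet t := fun t ht =>
    hAmeas t (Finset.mem_filter.1 ht).1
  have hFibdis : (↑Fib : Set (Set α)).PairwiseDisjoint (id : Set α → Set α) :=
    hAdis.subset (by rw [hFibdef]; exact_mod_cast Finset.filter_subset _ _)
  have hFibcov : ⋃ t ∈ Fib, (id t : Set α) = σ := by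
    apply Subset.antisymm
    · exact iUnion₂_subset fun t ht => hFibsub t ht
    · intro b hb
      have hτA : matom (F (n+1)) b ∈ A := (hAmem _).2 ⟨b, rfl⟩
      have hτne : (matom (F (n+1)) b).Nonempty := ⟨b, matom_mem b⟩
      have hgτ : g (matom (F (n+1)) b) = σ := by
        have h2 : g (matom (F (n+1)) b) = matom (F n) (pick (matom (F (n+1)) b)) := rfl
        rw [h2]
        have hp : pick (matom (F (n+1)) b) ∈ matom (F n) b :=
          matom_mono hm₁₂ b (hpick _ hτne)
        rw [matom_eq_of_mem hfin₁ hp]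
        rw [hσatom] at hb ⊢
        exact matom_eq_of_mem hfin₁ hb
      exact mem_biUnion (Finset.mem_filter.2 ⟨hτA, hgτ⟩)
        (matom_mem b)
  -- martingale property on σ
  have hint2 : Integrable (M (n+1)) μ := integrable_condExp.congr (hcond (n+1)).symm
  have heq2 : ∫ a in σ, M (n+1) a ∂μ = ∫ a in σ, Minf a ∂μ := by
    rw [setIntegral_congr_ae hσmα ((hcond (n+1)).mono fun a ha _ => ha)]
    exact setIntegral_condExp hm₂ hMint hσm₂
  have heq1 : ∫ a in σ, M n a ∂μ = ∫ a in σ, Minf a ∂μ := by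
    rw [setIntegral_congr_ae hσmα ((hcond n).mono fun a ha _ => ha)]
    exact setIntegral_condExp hm₁ hMint hσm₁
  have hxconst : ∀ b ∈ σ, M n b = x₀ := by
    intro b hb
    rw [hσatom] at hb
    rw [hx₀def, matom_const (hmeasM n) hb]
  have hInt1 : ∫ a in σ, M n a ∂μ = (μ σ).toReal • x₀ := by
    rw [setIntegral_congr_fun hσmα (fun b hb => hxconst b hb), setIntegral_const]
    rfl
  have hInt2 : ∫ a in σ, M (n+1) a ∂μ =
      ∑ t ∈ Fib, (μ t).toReal • M (n+1) (pick t) := by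
    rw [← hFibcov]
    simp only [id_eq]
    have hbu := integral_biUnion_finset (μ := μ) (f := M (n+1)) Fib hFibmeas hFibdis
      (fun t _ => hint2.integrableOn)
    rw [hbu]
    refine Finset.sum_congr rfl fun t ht => ?_
    have hconst : ∀ b ∈ (id t : Set α), M (n+1) b = M (n+1) (pick t) := by
      intro b hb
      have h1 := hAatom t (Finset.mem_filter.1 ht).1
      rw [h1] at hb
      exact matom_const (hmeasM (n+1)) hb
    rw [setIntegral_congr_fun (hFibmeas t ht) (fun b hb => hconst b hb), setIntegral_const]
    rfl
  have hkey : (μ σ).toReal • x₀ = ∑ t ∈ Fib, (μ t).toReal • M (n+1) (pick t) := by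
    rw [← hInt1, ← hInt2, heq1, heq2]
  -- split on whether σ is null
  rcases eq_or_ne (μ σ) 0 with hμσ | hμσ
  · have hz : ∀ t ∈ Fib, μ (id t) = 0 := fun t ht =>
      le_antisymm (hμσ ▸ measure_mono (hFibsub t ht)) zero_le
    have hL : ∑ t ∈ Fib, ((μ (id t)).toReal : EReal) * v₂ t = 0 :=
      Finset.sum_eq_zero fun t ht => by rw [hz t ht]; simp
    rw [hL]
    have : μ (id σ) = 0 := hμσ
    rw [this]
    simp
  · have hr : 0 < (μ σ).toReal := ENNReal.toReal_pos hμσ (measure_ne_top μ σ)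
    set c : Set α → ℝ := fun t => (μ t).toReal / (μ σ).toReal with hcdef
    have hcnn : ∀ t ∈ Fib, 0 ≤ c t := fun t _ =>
      div_nonneg ENNReal.toReal_nonneg hr.le
    have hμsum : μ σ = ∑ t ∈ Fib, μ t := by
      conv_lhs => rw [← hFibcov]
      exact measure_biUnion_finset hFibdis hFibmeas
    have hcsum : ∑ t ∈ Fib, c t = 1 := by
      rw [hcdef]
      rw [← Finset.sum_div]
      rw [div_eq_one_iff_eq hr.ne']
      rw [← ENNReal.toReal_sum (fun t _ => measure_ne_top μ t), ← hμsum]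
    have hxcomb : ∑ t ∈ Fib, c t • M (n+1) (pick t) = x₀ := by
      have h1 : ((μ σ).toReal)⁻¹ • ((μ σ).toReal • x₀) = x₀ := inv_smul_smul₀ hr.ne' x₀
      rw [← h1, hkey, Finset.smul_sum]
      refine Finset.sum_congr rfl fun t ht => ?_
      rw [smul_smul]
      congr 1
      simp only [hcdef]
      rw [div_eq_inv_mul]
    -- the convex hull condition
    have hmin : ∀ t : Set α, MeasurableSet[F n] t → t ⊆ σ → t = ∅ ∨ t = σ := by
      intro t htm hts
      rcases t.eq_empty_or_nonempty with h | h
      · exact Or.inl h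
      · right
        rw [hσatom] at hts ⊢
        exact matom_min hfin₁ htm hts h
    have hKw : convexHull ℝ ({M n (pick σ)} ∪ M (n+1) '' σ) ⊆ w :=
      hconv n σ hσm₁ hσne hmin (pick σ) ha₁
    have hyK : ∀ t ∈ Fib, M (n+1) (pick t) ∈
        convexHull ℝ ({M n (pick σ)} ∪ M (n+1) '' σ) := by
      intro t ht
      apply subset_convexHull
      right
      exact ⟨pick t, hFibsub t ht (hpick t (hAne t (Finset.mem_filter.1 ht).1)), rfl⟩
    have hjensen := ERX.jensen hG (convex_convexHull ℝ _) hKw Fib c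
      (fun t => M (n+1) (pick t)) hcnn hcsum hyK
    rw [hxcomb] at hjensen
    calc ∑ t ∈ Fib, ((μ (id t)).toReal : EReal) * v₂ t
        = ∑ t ∈ Fib, ((μ σ).toReal : EReal) * ((c t : EReal) * G (M (n+1) (pick t))) := by
          refine Finset.sum_congr rfl fun t ht => ?_
          rw [← mul_assoc, ← EReal.coe_mul, hcdef]
          rw [mul_div_cancel₀ _ hr.ne']
          rfl
      _ = ((μ σ).toReal : EReal) * ∑ t ∈ Fib, (c t : EReal) * G (M (n+1) (pick t)) :=
          (ERX.coe_mul_sum ENNReal.toReal_nonneg Fib _).symm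
      _ ≤ ((μ σ).toReal : EReal) * G x₀ :=
          mul_le_mul_of_nonneg_left hjensen (by exact_mod_cast ENNReal.toReal_nonneg)
      _ = ((μ (id σ)).toReal : EReal) * v₁ σ := rfl

/-- **Bellman induction.** Let `w ⊆ ℝ^d` be closed, `G` locally concave on `w`
with values in `ℝ ∪ {+∞}`, and `M` a `w`-martingale. Then `n ↦ E G(M_n)` is non-increasing. -/
theorem stmt4 {d : ℕ} (w : Set (Euc d)) (hw : IsClosed w) (G : Euc d → EReal)
    (hG : LocallyConcaveOn w G) (X : WMartingale w) :
    ∀ m n : ℕ, m ≤ n →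
      @erealExp X.α X.mα X.μ (fun a => G (X.M n a)) ≤
        @erealExp X.α X.mα X.μ (fun a => G (X.M m a)) := by
  obtain ⟨hprob, hfin, hbot, hmeasM, hMint, hMinf, hcond, hconv⟩ := X.isWMart
  have step : ∀ k, @erealExp X.α X.mα X.μ (fun a => G (X.M (k+1) a)) ≤
      @erealExp X.α X.mα X.μ (fun a => G (X.M k a)) := fun k =>
    mainStep hG (mα := X.mα) X.isWMart k
  intro m n hmn
  induction n, hmn using Nat.le_induction with
  | base => exact le_refl _
  | succ n hmn ih => exact (step n).trans ih
end
end

section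
/- Let w ⊆ ℝ^d be a strongly martingale connected closed set. Then for every locally concave function G : w → ℝ ∪ {+∞}, the infimum of G over w equals the infimum of G over the fixed boundary: inf_{x ∈ w} G(x) = inf_{x ∈ ∂_fixed w} G(x). -/
open Set MeasureTheory
open scoped ENNReal

noncomputable section

/-! ### Auxiliary lemmas -/

section Aux

/-- The atom of a σ-algebra `m` containing a point `a`. -/
def atomOf {α : Type} (m : MeasurableSpace α) (a : α) : Set α :=
  ⋂₀ {s | MeasurableSet[m] s ∧ a ∈ s}

lemma mem_atomOf {α : Type} (m : MeasurableSpace α) (a : α) : a ∈ atomOf m a :=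
  fun _ hs => hs.2

lemma atomOf_subset {α : Type} {m : MeasurableSpace α} {s : Set α}
    (hs : MeasurableSet[m] s) {a : α} (ha : a ∈ s) : atomOf m a ⊆ s :=
  Set.sInter_subset_of_mem ⟨hs, ha⟩

lemma measurableSet_atomOf {α : Type} {m : MeasurableSpace α}
    (hfin : {s : Set α | MeasurableSet[m] s}.Finite) (a : α) :
    MeasurableSet[m] (atomOf m a) :=
  MeasurableSet.sInter ((hfin.subset (fun _ hs => hs.1)).countable) (fun _ ht => ht.1)

lemma atomOf_eq_of_mem {α : Type} {m : MeasurableSpace α} {a b : α}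
    (hb : b ∈ atomOf m a) : atomOf m b = atomOf m a := by
  have key : ∀ s : Set α, MeasurableSet[m] s → (a ∈ s ↔ b ∈ s) := by
    intro s hs
    constructor
    · intro h; exact atomOf_subset hs h hb
    · intro h
      by_contra hna
      exact (atomOf_subset hs.compl hna hb) h
  have : {s : Set α | MeasurableSet[m] s ∧ b ∈ s} =
      {s : Set α | MeasurableSet[m] s ∧ a ∈ s} := by
    ext s; exact and_congr_right fun hs => (key s hs).symm
  simp only [atomOf, this]

lemma eq_on_atomOf {α : Type} {m : MeasurableSpace α} {β : Type*} [MeasurableSpace β]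
    [MeasurableSingletonClass β] {f : α → β} (hf : Measurable[m] f) {a b : α}
    (hb : b ∈ atomOf m a) : f b = f a :=
  atomOf_subset (hf (measurableSet_singleton (f a))) rfl hb

lemma atomOf_atomic {α : Type} {m : MeasurableSpace α} (a : α)
    (t : Set α) (ht : MeasurableSet[m] t) (hts : t ⊆ atomOf m a) :
    t = ∅ ∨ t = atomOf m a := by
  rcases t.eq_empty_or_nonempty with h | ⟨b, hb⟩
  · exact Or.inl h
  · right
    refine subset_antisymm hts ?_
    have h1 : atomOf m b = atomOf m a := atomOf_eq_of_mem (hts hb)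
    calc atomOf m a = atomOf m b := h1.symm
      _ ⊆ t := atomOf_subset ht hb

lemma ereal_min_le_comb (u v : EReal) (a b : ℝ) (ha : 0 ≤ a) (hb : 0 ≤ b)
    (hab : a + b = 1) : min u v ≤ (a : EReal) * u + (b : EReal) * v := by
  have h1 : (a : EReal) * min u v ≤ (a : EReal) * u :=
    mul_le_mul_of_nonneg_left (min_le_left u v) (by exact_mod_cast ha)
  have h2 : (b : EReal) * min u v ≤ (b : EReal) * v :=
    mul_le_mul_of_nonneg_left (min_le_right u v) (by exact_mod_cast hb)
  calc min u v = (1 : EReal) * min u v := (one_mul _).symm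
    _ = ((a : EReal) + (b : EReal)) * min u v := by
        rw [← EReal.coe_add, hab, EReal.coe_one]
    _ = (a : EReal) * min u v + (b : EReal) * min u v :=
        EReal.right_distrib_of_nonneg (by exact_mod_cast ha) (by exact_mod_cast hb)
    _ ≤ (a : EReal) * u + (b : EReal) * v := add_le_add h1 h2

/-- Jensen-type minimum principle for locally concave functions on a convex subset of `w`. -/
lemma jensen_min {d : ℕ} {w : Set (Euc d)} {G : Euc d → EReal}
    (hG : LocallyConcaveOn w G) {K : Set (Euc d)} (hK : Convex ℝ K) (hKw : K ⊆ w) :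
    ∀ (s : Finset (Euc d)) (lam : Euc d → ℝ), (↑s ⊆ K) → (∀ i ∈ s, 0 ≤ lam i) →
      (∑ i ∈ s, lam i = 1) →
      ∃ i ∈ s, 0 < lam i ∧ G i ≤ G (∑ i ∈ s, lam i • i) := by
  classical
  intro s
  induction s using Finset.induction_on with
  | empty => intro lam _ _ hsum; simp at hsum
  | insert j s hj ihs =>
    intro lam hsK hlam hsum
    rw [Finset.sum_insert hj] at hsum
    rw [Finset.sum_insert hj]
    by_cases hj0 : lam j = 0
    · rw [hj0, zero_add] at hsum
      obtain ⟨i, his, hipos, hile⟩ := ihs lam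
        (Set.Subset.trans (by intro z hz; exact Finset.mem_insert_of_mem hz) hsK)
        (fun i hi => hlam i (Finset.mem_insert_of_mem hi)) hsum
      refine ⟨i, Finset.mem_insert_of_mem his, hipos, ?_⟩
      rwa [hj0, zero_smul, zero_add]
    by_cases hs0 : ∑ i ∈ s, lam i = 0
    · have hall : ∀ i ∈ s, lam i = 0 :=
        (Finset.sum_eq_zero_iff_of_nonneg
          (fun i hi => hlam i (Finset.mem_insert_of_mem hi))).1 hs0
      have hjs : lam j = 1 := by rw [hs0, add_zero] at hsum; exact hsum
      have hzero : ∑ i ∈ s, lam i • i = 0 :=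
        Finset.sum_eq_zero fun i hi => by rw [hall i hi, zero_smul]
      refine ⟨j, Finset.mem_insert_self j s, by rw [hjs]; norm_num, ?_⟩
      rw [hzero, add_zero, hjs, one_smul]
    -- main case
    set a := lam j with ha_def
    set b := ∑ i ∈ s, lam i with hb_def
    have ha : 0 < a := lt_of_le_of_ne (hlam j (Finset.mem_insert_self j s)) (Ne.symm hj0)
    have hbnn : 0 ≤ b := Finset.sum_nonneg fun i hi => hlam i (Finset.mem_insert_of_mem hi)
    have hb : 0 < b := lt_of_le_of_ne hbnn (Ne.symm hs0)
    set y := b⁻¹ • ∑ i ∈ s, lam i • i with hy_def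
    have hyeq : y = ∑ i ∈ s, (lam i / b) • i := by
      rw [hy_def, Finset.smul_sum]
      refine Finset.sum_congr rfl fun i _ => ?_
      rw [smul_smul, inv_mul_eq_div]
    have hsumdiv : ∑ i ∈ s, lam i / b = 1 := by
      rw [← Finset.sum_div, ← hb_def, div_self hb.ne']
    have hjK : j ∈ K := hsK (Finset.mem_insert_self j s)
    have hyK : y ∈ K := by
      rw [hyeq]
      exact hK.sum_mem (fun i hi => div_nonneg (hlam i (Finset.mem_insert_of_mem hi)) hb.le)
        hsumdiv (fun i hi => hsK (Finset.mem_insert_of_mem hi))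
    have hconc := hG j (hKw hjK) y (hKw hyK)
      (Set.Subset.trans (hK.segment_subset hjK hyK) hKw) a b ha.le hb.le hsum
    have hpt : a • j + b • y = lam j • j + ∑ i ∈ s, lam i • i := by
      rw [hy_def, smul_inv_smul₀ hb.ne']
    rw [hpt] at hconc
    obtain ⟨i, his, hipos, hile⟩ := ihs (fun i => lam i / b)
      (Set.Subset.trans (by intro z hz; exact Finset.mem_insert_of_mem hz) hsK)
      (fun i hi => div_nonneg (hlam i (Finset.mem_insert_of_mem hi)) hb.le) hsumdiv
    have hGy : G i ≤ G y := by rw [hyeq]; exact hile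
    have hmin : min (G j) (G y) ≤ G (lam j • j + ∑ i ∈ s, lam i • i) :=
      le_trans (ereal_min_le_comb (G j) (G y) a b ha.le hb.le hsum) hconc
    rcases le_total (G j) (G y) with hle | hle
    · refine ⟨j, Finset.mem_insert_self j s, ha, ?_⟩
      rwa [min_eq_left hle] at hmin
    · refine ⟨i, Finset.mem_insert_of_mem his, ?_, ?_⟩
      · rcases div_pos_iff.1 hipos with ⟨h1, _⟩ | ⟨_, h2⟩
        · exact h1
        · exact absurd h2 (not_lt.2 hb.le)
      · refine le_trans hGy ?_
        rwa [min_eq_right hle] at hmin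

open MeasureTheory in
/-- The key one-step lemma: from a point in a positive-measure atom at time `k`, find a
point in a positive-measure atom at time `k+1` where `G ∘ M` did not increase. -/
lemma wmart_step {d : ℕ} {w : Set (Euc d)} {G : Euc d → EReal}
    (hG : LocallyConcaveOn w G) {α : Type} {mα : MeasurableSpace α} {μ : Measure α}
    {F : Filtration ℕ mα} {M : ℕ → α → Euc d} {Minf : α → Euc d}
    (hX : IsWMart μ F M Minf w) (k : ℕ) (a0 : α)
    (h0 : μ (atomOf (F k) a0) ≠ 0) :
    ∃ a1, μ (atomOf (F (k+1)) a1) ≠ 0 ∧ G (M (k+1) a1) ≤ G (M k a0) := by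
  classical
  obtain ⟨hprob, hfin, hF0, hmeas, hint, hfb, hcond, hhull⟩ := hX
  haveI := hprob
  set σ := atomOf (F k) a0 with hσ_def
  have hσm : MeasurableSet[F k] σ := measurableSet_atomOf (hfin k) a0
  have hσm' : MeasurableSet[F (k+1)] σ := F.mono (Nat.le_succ k) σ hσm
  have hσmα : MeasurableSet σ := F.le k σ hσm
  have ha0σ : a0 ∈ σ := mem_atomOf _ _
  have hσne : σ.Nonempty := ⟨a0, ha0σ⟩
  have hKw : convexHull ℝ ({M k a0} ∪ M (k+1) '' σ) ⊆ w :=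
    hhull k σ hσm hσne (fun t ht hts => atomOf_atomic a0 t ht hts) a0 ha0σ
  have hM1int : Integrable (M (k+1)) μ := integrable_condExp.congr (hcond (k+1)).symm
  -- the fibers of M (k+1) on σ
  set Fib : Euc d → Set α := fun y => σ ∩ (M (k+1)) ⁻¹' {y} with hFib_def
  have hFibm' : ∀ y, MeasurableSet[F (k+1)] (Fib y) :=
    fun y => hσm'.inter (hmeas (k+1) (measurableSet_singleton y))
  have hFibmα : ∀ y, MeasurableSet (Fib y) := fun y => F.le (k+1) _ (hFibm' y)
  set V : Set (Euc d) := M (k+1) '' σ with hV_def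
  have hVfin : V.Finite := by
    apply Set.Finite.of_finite_image (f := Fib)
    · exact (hfin (k+1)).subset (by rintro s ⟨y, _, rfl⟩; exact hFibm' y)
    · rintro y ⟨b, hbσ, rfl⟩ y' ⟨b', hb'σ, rfl⟩ h
      have hb : b ∈ Fib (M (k+1) b) := ⟨hbσ, rfl⟩
      rw [h] at hb
      exact (hb.2 : M (k+1) b = M (k+1) b')
  set T : Finset (Euc d) := hVfin.toFinset with hT_def
  have hmemT : ∀ y, y ∈ T ↔ y ∈ V := fun y => hVfin.mem_toFinset
  have hcover : σ = ⋃ y ∈ T, Fib y := by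
    apply subset_antisymm
    · intro c hc
      exact Set.mem_biUnion ((hmemT _).2 ⟨c, hc, rfl⟩) ⟨hc, rfl⟩
    · intro c hc
      obtain ⟨y, _, hcy⟩ := Set.mem_iUnion₂.1 hc
      exact hcy.1
  have hdisj : (↑T : Set (Euc d)).Pairwise (Function.onFun Disjoint Fib) := by
    intro y _ y' _ hne
    refine Set.disjoint_left.2 fun c hc hc' => hne ?_
    rw [← (hc.2 : M (k+1) c = y), ← (hc'.2 : M (k+1) c = y')]
  have hμσ : μ σ = ∑ y ∈ T, μ (Fib y) := by
    rw [hcover]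
    exact measure_biUnion_finset hdisj (fun y _ => hFibmα y)
  have hμσ_top : μ σ ≠ ⊤ := measure_ne_top μ σ
  have hμσR : (μ σ).toReal ≠ 0 := by
    simp only [ENNReal.toReal_ne_zero]
    exact ⟨h0, hμσ_top⟩
  -- integral identities
  have I0 : ∫ x in σ, M k x ∂μ = (μ σ).toReal • M k a0 := by
    rw [setIntegral_congr_fun hσmα (fun b hb => eq_on_atomOf (hmeas k) hb)]
    exact setIntegral_const _
  have I1 : ∫ x in σ, M k x ∂μ = ∫ x in σ, Minf x ∂μ := by
    refine Eq.trans ?_ (setIntegral_condExp (F.le k) hint hσm)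
    exact setIntegral_congr_ae hσmα ((hcond k).mono fun a ha _ => ha)
  have I2 : ∫ x in σ, M (k+1) x ∂μ = ∫ x in σ, Minf x ∂μ := by
    refine Eq.trans ?_ (setIntegral_condExp (F.le (k+1)) hint hσm')
    exact setIntegral_congr_ae hσmα ((hcond (k+1)).mono fun a ha _ => ha)
  have I3 : ∫ x in σ, M (k+1) x ∂μ = ∑ y ∈ T, (μ (Fib y)).toReal • y := by
    rw [hcover, integral_biUnion_finset T (fun y _ => hFibmα y) hdisj
      (fun y _ => hM1int.integrableOn)]
    refine Finset.sum_congr rfl fun y _ => ?_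
    rw [setIntegral_congr_fun (hFibmα y) (fun c hc => (hc.2 : M (k+1) c = y))]
    exact setIntegral_const y
  have hcomb : (μ σ).toReal • M k a0 = ∑ y ∈ T, (μ (Fib y)).toReal • y := by
    rw [← I0, I1, ← I2, I3]
  -- weights
  set lam : Euc d → ℝ := fun y => (μ σ).toReal⁻¹ * (μ (Fib y)).toReal with hlam_def
  have hlam_nn : ∀ y ∈ T, 0 ≤ lam y :=
    fun y _ => mul_nonneg (inv_nonneg.2 ENNReal.toReal_nonneg) ENNReal.toReal_nonneg
  have hlam_sum : ∑ y ∈ T, lam y = 1 := by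
    rw [← Finset.mul_sum, ← ENNReal.toReal_sum (fun y _ => measure_ne_top μ _), ← hμσ,
      inv_mul_cancel₀ hμσR]
  have hpt : ∑ y ∈ T, lam y • y = M k a0 := by
    have : ∑ y ∈ T, lam y • y = (μ σ).toReal⁻¹ • ∑ y ∈ T, (μ (Fib y)).toReal • y := by
      rw [Finset.smul_sum]
      exact Finset.sum_congr rfl fun y _ => by rw [smul_smul]
    rw [this, ← hcomb, smul_smul, inv_mul_cancel₀ hμσR, one_smul]
  -- apply Jensen
  set K := convexHull ℝ ({M k a0} ∪ V) with hK_def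
  have hTK : (↑T : Set (Euc d)) ⊆ K := by
    intro y hy
    exact subset_convexHull ℝ _ (Or.inr ((hmemT y).1 hy))
  obtain ⟨y, hyT, hypos, hyle⟩ :=
    jensen_min hG (convex_convexHull ℝ _) hKw T lam hTK hlam_nn hlam_sum
  rw [hpt] at hyle
  have hμFib : μ (Fib y) ≠ 0 := by
    intro hzero
    rw [hlam_def] at hypos
    simp [hzero] at hypos
  -- find a point of Fib y in a positive-measure atom of F (k+1)
  have hfind : ∃ a1 ∈ Fib y, μ (atomOf (F (k+1)) a1) ≠ 0 := by
    by_contra hcon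
    push_neg at hcon
    have hsub : Fib y ⊆ ⋃₀ (atomOf (F (k+1)) '' (Fib y)) :=
      fun c hc => ⟨atomOf (F (k+1)) c, ⟨c, hc, rfl⟩, mem_atomOf _ _⟩
    have hcnt : (atomOf (F (k+1)) '' (Fib y)).Countable := by
      refine Set.Finite.countable ((hfin (k+1)).subset ?_)
      rintro s ⟨c, _, rfl⟩
      exact measurableSet_atomOf (hfin (k+1)) c
    have hnull : μ (⋃₀ (atomOf (F (k+1)) '' (Fib y))) = 0 := by
      refine (measure_sUnion_null_iff hcnt).2 ?_
      rintro s ⟨c, hc, rfl⟩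
      exact hcon c hc
    exact hμFib (measure_mono_null hsub hnull)
  obtain ⟨a1, ha1, hatom⟩ := hfind
  refine ⟨a1, hatom, ?_⟩
  rw [(ha1.2 : M (k+1) a1 = y)]
  exact hyle

end Aux

/-- **Minimal principle.** Let `w ⊆ ℝ^d` be a strongly martingale connected
closed set. Then for every locally concave `G : w → ℝ ∪ {+∞}`,
`inf_{x ∈ w} G(x) = inf_{x ∈ ∂_fixed w} G(x)`. -/
theorem stmt5 {d : ℕ} (w : Set (Euc d)) (hw : IsClosed w)
    (hconn : StronglyMartingaleConnected w) (G : Euc d → EReal)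
    (hG : LocallyConcaveOn w G) :
    ⨅ x ∈ w, G x = ⨅ x ∈ fixedBoundary w, G x := by
  apply le_antisymm
  · -- `inf over w ≤ inf over fixed boundary` since the fixed boundary is included in `w`
    refine le_iInf₂ fun x hx => ?_
    have hxw : x ∈ w := hw.closure_eq ▸ frontier_subset_closure hx.1
    exact iInf₂_le x hxw
  · -- for each `x ∈ w`, run a simple `w`-martingale from `x`
    refine le_iInf₂ fun x hx => ?_
    obtain ⟨X, ⟨n, hn⟩, h0⟩ := hconn x hx
    letI : MeasurableSpace X.α := X.mα
    have hX := X.isWMart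
    obtain ⟨hprob, hfin, hF0, hmeas, hint, hfb, hcond, hhull⟩ := hX
    haveI := hprob
    have key : ∀ k, ∃ a, X.μ (atomOf (X.F k) a) ≠ 0 ∧ G (X.M k a) ≤ G x := by
      intro k
      induction k with
      | zero =>
        have huniv : X.μ Set.univ ≠ 0 := by
          rw [measure_univ]; exact one_ne_zero
        obtain ⟨a, _⟩ := nonempty_of_measure_ne_zero huniv
        refine ⟨a, ?_, by rw [h0 a]⟩
        have hatom : atomOf (X.F 0) a = Set.univ := by
          apply subset_antisymm (Set.subset_univ _)
          intro c _
          intro s hs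
          have hmeas_bot : MeasurableSet[(⊥ : MeasurableSpace X.α)] s := hF0 ▸ hs.1
          rcases MeasurableSpace.measurableSet_bot_iff.1 hmeas_bot with rfl | rfl
          · exact absurd hs.2 (Set.notMem_empty a)
          · trivial
        rw [hatom, measure_univ]
        exact one_ne_zero
      | succ k ih =>
        obtain ⟨a, ha, hGa⟩ := ih
        obtain ⟨a1, ha1, hGa1⟩ :=
          wmart_step hG X.isWMart k a ha
        exact ⟨a1, ha1, hGa1.trans hGa⟩
    obtain ⟨a, _, hGa⟩ := key n
    have hfbmem : X.Minf a ∈ fixedBoundary w := hfb a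
    calc ⨅ y ∈ fixedBoundary w, G y ≤ G (X.Minf a) := iInf₂_le _ hfbmem
      _ = G (X.M n a) := by rw [hn]
      _ ≤ G x := hGa
end
end

section
/- Let w ⊆ ℝ^d be a strongly martingale connected closed set and let f : ∂_fixed w → ℝ be bounded from below. Then the martingale Bellman function ℬ_{w,f} belongs to Λ_{w,f}; that is, ℬ_{w,f} is locally concave on w and ℬ_{w,f}(x) ≥ f(x) for every x ∈ ∂_fixed w. -/
open Set MeasureTheory
open scoped ENNReal

noncomputable section

section Helpers


lemma ereal_mul_bot_lt {a : ℝ} (ha : 0 < a) {t : EReal} (ht : ⊥ < t) : ⊥ < (a : EReal) * t := by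
  induction t using EReal.rec with
  | bot => exact absurd ht (lt_irrefl _)
  | coe r => rw [← EReal.coe_mul]; exact EReal.bot_lt_coe _
  | top => rw [EReal.coe_mul_top_of_pos ha]; exact bot_lt_top

lemma ereal_mul_iSup {ι : Sort*} (v : ι → EReal) {a : ℝ} (ha : 0 < a) :
    (a : EReal) * (⨆ i, v i) = ⨆ i, (a : EReal) * v i := by
  have key : ∀ (c : ℝ), 0 < c → ∀ t : EReal, (c : EReal) * ((c⁻¹ : ℝ) * t) = t := by
    intro c hc t
    rw [← mul_assoc, ← EReal.coe_mul, mul_inv_cancel₀ hc.ne', EReal.coe_one, one_mul]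
  refine le_antisymm ?_ (iSup_le fun i => mul_le_mul_of_nonneg_left (le_iSup v i)
    (by exact_mod_cast ha.le))
  have h1 : (⨆ i, v i) ≤ (a⁻¹ : ℝ) * ⨆ i, (a : EReal) * v i := by
    refine iSup_le fun i => ?_
    calc v i = (a⁻¹ : ℝ) * ((a : EReal) * v i) := by
              rw [← mul_assoc, ← EReal.coe_mul, inv_mul_cancel₀ ha.ne', EReal.coe_one, one_mul]
    _ ≤ _ := mul_le_mul_of_nonneg_left (le_iSup (fun i => (a : EReal) * v i) i)
              (by exact_mod_cast (inv_pos.mpr ha).le)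
  calc (a : EReal) * (⨆ i, v i) ≤ (a : EReal) * ((a⁻¹ : ℝ) * ⨆ i, (a : EReal) * v i) :=
        mul_le_mul_of_nonneg_left h1 (by exact_mod_cast ha.le)
  _ = _ := key a ha _

lemma ereal_iSup_add {ι : Sort*} [Nonempty ι] (f : ι → EReal) (B : EReal)
    (hf : ∀ i, ⊥ < f i) (hB : ⊥ < B) : (⨆ i, f i) + B = ⨆ i, (f i + B) := by
  induction B using EReal.rec with
  | bot => exact absurd hB (lt_irrefl _)
  | coe r =>
    refine le_antisymm ?_ (iSup_le fun i => add_le_add_left (le_iSup f i) _)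
    refine (EReal.le_sub_iff_add_le (Or.inl (EReal.coe_ne_bot r))
      (Or.inl (EReal.coe_ne_top r))).mp (iSup_le fun i => ?_)
    exact (EReal.le_sub_iff_add_le (Or.inl (EReal.coe_ne_bot r))
      (Or.inl (EReal.coe_ne_top r))).mpr (le_iSup (fun i => f i + (r : EReal)) i)
  | top =>
    obtain i₀ := Classical.arbitrary ι
    rw [EReal.add_top_of_ne_bot]
    · refine le_antisymm (le_trans ?_ (le_iSup _ i₀)) le_top
      rw [EReal.add_top_of_ne_bot (hf i₀).ne']
    · exact ((hf i₀).trans_le (le_iSup f i₀)).ne'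

lemma ereal_add_iSup_le {ι κ : Sort*} [Nonempty ι] [Nonempty κ] {u : ι → EReal} {v : κ → EReal}
    {C : EReal} (hu : ∀ i, ⊥ < u i) (hv : ∀ j, ⊥ < v j) (h : ∀ i j, u i + v j ≤ C) :
    (⨆ i, u i) + (⨆ j, v j) ≤ C := by
  have hB : ⊥ < ⨆ j, v j := (hv (Classical.arbitrary κ)).trans_le (le_iSup v _)
  rw [ereal_iSup_add u _ hu hB]
  refine iSup_le fun i => ?_
  rw [add_comm, ereal_iSup_add v _ hv (hu i)]
  exact iSup_le fun j => by rw [add_comm]; exact h i j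

lemma erealToENNReal_coe (r : ℝ) : erealToENNReal ((r : ℝ) : EReal) = ENNReal.ofReal r := by
  simp [erealToENNReal]

lemma erealToENNReal_neg_coe (r : ℝ) :
    erealToENNReal (-((r : ℝ) : EReal)) = ENNReal.ofReal (-r) := by
  rw [← EReal.coe_neg, erealToENNReal_coe]

lemma coe_ofReal_ereal (r : ℝ) (hr : 0 ≤ r) : ((ENNReal.ofReal r : ℝ≥0∞) : EReal) = (r : EReal) := by
  rw [EReal.coe_ennreal_ofReal, max_eq_left hr]

lemma erealExp_const {α : Type} [MeasurableSpace α] (μ : Measure α) [IsProbabilityMeasure μ]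
    (r : ℝ) : erealExp μ (fun _ => ((r : ℝ) : EReal)) = (r : EReal) := by
  simp only [erealExp, erealToENNReal_coe, erealToENNReal_neg_coe, lintegral_const,
    measure_univ, mul_one]
  rw [EReal.coe_ennreal_ofReal, EReal.coe_ennreal_ofReal]
  have : ((max r 0 : ℝ) : EReal) - ((max (-r) 0 : ℝ) : EReal) = ((max r 0 - max (-r) 0 : ℝ) : EReal) :=
    (EReal.coe_sub _ _).symm
  rw [this]
  congr 1
  rcases le_total r 0 with h | h
  · rw [max_eq_right h, max_eq_left (neg_nonneg.mpr h)]; ring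
  · rw [max_eq_left h, max_eq_right (neg_nonpos.mpr h)]; ring

lemma enn_coe_fin {N : ℝ≥0∞} (hN : N ≠ ⊤) : ((N : EReal)) = ((N.toReal : ℝ) : EReal) := by
  conv_lhs => rw [← ENNReal.ofReal_toReal hN]
  rw [EReal.coe_ennreal_ofReal, max_eq_left ENNReal.toReal_nonneg]

lemma ereal_sub_fin_bot_lt {P N : ℝ≥0∞} (hN : N ≠ ⊤) : ⊥ < (P : EReal) - (N : EReal) := by
  rw [enn_coe_fin hN]
  rcases eq_or_ne P ⊤ with hP | hP
  · rw [hP, EReal.coe_ennreal_top, EReal.top_sub_coe]; exact bot_lt_top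
  · rw [enn_coe_fin hP, ← EReal.coe_sub]; exact EReal.bot_lt_coe _

lemma ereal_split_arith {a b : ℝ} (ha : 0 < a) (hb : 0 < b) {P Q N M : ℝ≥0∞}
    (hN : N ≠ ⊤) (hM : M ≠ ⊤) :
    ((ENNReal.ofReal a * P + ENNReal.ofReal b * Q : ℝ≥0∞) : EReal) -
      ((ENNReal.ofReal a * N + ENNReal.ofReal b * M : ℝ≥0∞) : EReal) =
    (a : EReal) * ((P : EReal) - (N : EReal)) + (b : EReal) * ((Q : EReal) - (M : EReal)) := by
  have hoa : ENNReal.ofReal a ≠ ⊤ := ENNReal.ofReal_ne_top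
  have hob : ENNReal.ofReal b ≠ ⊤ := ENNReal.ofReal_ne_top
  have hfin : ENNReal.ofReal a * N + ENNReal.ofReal b * M ≠ ⊤ :=
    ENNReal.add_ne_top.mpr ⟨ENNReal.mul_ne_top hoa hN, ENNReal.mul_ne_top hob hM⟩
  rcases eq_or_ne P ⊤ with hP | hP
  · have h1 : ENNReal.ofReal a * P + ENNReal.ofReal b * Q = ⊤ := by
      rw [hP, ENNReal.mul_top (ENNReal.ofReal_pos.mpr ha).ne', top_add]
    rw [h1, EReal.coe_ennreal_top, enn_coe_fin hfin, EReal.top_sub_coe, hP,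
      EReal.coe_ennreal_top]
    have h2 : (⊤ : EReal) - (N : EReal) = ⊤ := by
      rw [enn_coe_fin hN, EReal.top_sub_coe]
    rw [h2, EReal.coe_mul_top_of_pos ha]
    rw [EReal.top_add_of_ne_bot (ereal_mul_bot_lt hb (ereal_sub_fin_bot_lt hM)).ne']
  rcases eq_or_ne Q ⊤ with hQ | hQ
  · have h1 : ENNReal.ofReal a * P + ENNReal.ofReal b * Q = ⊤ := by
      rw [hQ, ENNReal.mul_top (ENNReal.ofReal_pos.mpr hb).ne', add_top]
    rw [h1, EReal.coe_ennreal_top, enn_coe_fin hfin, EReal.top_sub_coe, hQ,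
      EReal.coe_ennreal_top]
    have h2 : (⊤ : EReal) - (M : EReal) = ⊤ := by
      rw [enn_coe_fin hM, EReal.top_sub_coe]
    rw [h2, EReal.coe_mul_top_of_pos hb]
    rw [EReal.add_top_of_ne_bot (ereal_mul_bot_lt ha (ereal_sub_fin_bot_lt hN)).ne']
  · have hfin' : ENNReal.ofReal a * P + ENNReal.ofReal b * Q ≠ ⊤ :=
      ENNReal.add_ne_top.mpr ⟨ENNReal.mul_ne_top hoa hP, ENNReal.mul_ne_top hob hQ⟩
    rw [enn_coe_fin hfin', enn_coe_fin hfin, enn_coe_fin hP, enn_coe_fin hQ,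
      enn_coe_fin hN, enn_coe_fin hM, ← EReal.coe_sub, ← EReal.coe_sub, ← EReal.coe_sub,
      ← EReal.coe_mul, ← EReal.coe_mul, ← EReal.coe_add, EReal.coe_eq_coe_iff]
    rw [ENNReal.toReal_add (ENNReal.mul_ne_top hoa hP) (ENNReal.mul_ne_top hob hQ),
      ENNReal.toReal_add (ENNReal.mul_ne_top hoa hN) (ENNReal.mul_ne_top hob hM),
      ENNReal.toReal_mul, ENNReal.toReal_mul, ENNReal.toReal_mul, ENNReal.toReal_mul,
      ENNReal.toReal_ofReal ha.le, ENNReal.toReal_ofReal hb.le]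
    ring

lemma erealExp_bot_lt {α : Type} [MeasurableSpace α] (μ : Measure α) (Y : α → EReal)
    (h : (∫⁻ a, erealToENNReal (-(Y a)) ∂μ) ≠ ⊤) : ⊥ < erealExp μ Y :=
  ereal_sub_fin_bot_lt h

section SumSpace
variable {A B : Type} {mA : MeasurableSpace A} {mB : MeasurableSpace B}

lemma measurableEmbedding_inl' : MeasurableEmbedding (@Sum.inl A B) :=
  ⟨Sum.inl_injective, measurable_inl, fun _ hs => measurableSet_inl_image.mpr hs⟩

lemma measurableEmbedding_inr' : MeasurableEmbedding (@Sum.inr A B) :=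
  ⟨Sum.inr_injective, measurable_inr, fun _ hs => measurableSet_inr_image.mpr hs⟩

end SumSpace

def sumMS {A B : Type} (m1 : MeasurableSpace A) (m2 : MeasurableSpace B) :
    MeasurableSpace (A ⊕ B) := @Sum.instMeasurableSpace A B m1 m2

lemma measurableSet_sumMS {A B : Type} {m1 : MeasurableSpace A} {m2 : MeasurableSpace B}
    {s : Set (A ⊕ B)} : MeasurableSet[sumMS m1 m2] s ↔
      MeasurableSet[m1] (Sum.inl ⁻¹' s) ∧ MeasurableSet[m2] (Sum.inr ⁻¹' s) :=
  @measurableSet_sum_iff A B m1 m2 s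

lemma sumMS_mono {A B : Type} {m1 m1' : MeasurableSpace A} {m2 m2' : MeasurableSpace B}
    (h1 : m1 ≤ m1') (h2 : m2 ≤ m2') : sumMS m1 m2 ≤ sumMS m1' m2' := by
  intro s hs
  rw [measurableSet_sumMS] at hs ⊢
  exact ⟨h1 _ hs.1, h2 _ hs.2⟩


lemma preimage_pair_injective {A B : Type} :
    Function.Injective (fun s : Set (A ⊕ B) => (Sum.inl ⁻¹' s, Sum.inr ⁻¹' s)) := by
  intro s t h
  simp only [Prod.mk.injEq] at h
  ext u
  cases u with
  | inl u => exact Set.ext_iff.mp h.1 u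
  | inr u => exact Set.ext_iff.mp h.2 u

lemma sumMS_finite {A B : Type} {m1 : MeasurableSpace A} {m2 : MeasurableSpace B}
    (h1 : {s : Set A | MeasurableSet[m1] s}.Finite)
    (h2 : {s : Set B | MeasurableSet[m2] s}.Finite) :
    {s : Set (A ⊕ B) | MeasurableSet[sumMS m1 m2] s}.Finite := by
  have : {s : Set (A ⊕ B) | MeasurableSet[sumMS m1 m2] s} =
      (fun s : Set (A ⊕ B) => (Sum.inl ⁻¹' s, Sum.inr ⁻¹' s)) ⁻¹'
        ({s : Set A | MeasurableSet[m1] s} ×ˢ {s : Set B | MeasurableSet[m2] s}) := by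
    ext s; simp [measurableSet_sumMS, Set.mem_prod]
  rw [this]
  exact Set.Finite.preimage (preimage_pair_injective.injOn) (h1.prod h2)

lemma inr_preimage_inl_image {A B : Type} (t : Set A) :
    Sum.inr ⁻¹' (Sum.inl '' t : Set (A ⊕ B)) = ∅ := by ext u; simp

lemma inl_preimage_inr_image {A B : Type} (t : Set B) :
    Sum.inl ⁻¹' (Sum.inr '' t : Set (A ⊕ B)) = ∅ := by ext u; simp

lemma measurableSet_sumMS_inl {A B : Type} {m1 : MeasurableSpace A} {m2 : MeasurableSpace B}
    {t : Set A} (ht : MeasurableSet[m1] t) : MeasurableSet[sumMS m1 m2] (Sum.inl '' t) :=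
  measurableSet_sumMS.mpr ⟨by rwa [Set.preimage_image_eq _ Sum.inl_injective],
    by rw [inr_preimage_inl_image]; exact @MeasurableSet.empty _ m2⟩

lemma measurableSet_sumMS_inr {A B : Type} {m1 : MeasurableSpace A} {m2 : MeasurableSpace B}
    {t : Set B} (ht : MeasurableSet[m2] t) : MeasurableSet[sumMS m1 m2] (Sum.inr '' t) :=
  measurableSet_sumMS.mpr ⟨by rw [inl_preimage_inr_image]; exact @MeasurableSet.empty _ m1,
    by rwa [Set.preimage_image_eq _ Sum.inr_injective]⟩

lemma measurable_sumElim' {A B C : Type} {m1 : MeasurableSpace A} {m2 : MeasurableSpace B}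
    {mC : MeasurableSpace C} {f : A → C} {g : B → C} (hf : Measurable[m1] f)
    (hg : Measurable[m2] g) : @Measurable _ _ (sumMS m1 m2) mC (Sum.elim f g) :=
  @Measurable.sumElim A B C m1 m2 mC f g hf hg

lemma bot_measurable_finite {A : Type} :
    {s : Set A | MeasurableSet[⊥] s}.Finite := by
  refine Set.Finite.subset ((Set.finite_singleton (∅ : Set A)).insert Set.univ) ?_
  intro s hs
  rcases MeasurableSpace.measurableSet_bot_iff.mp hs with h | h <;> simp [h]


lemma negpart_lintegral_ne_top {d : ℕ} {w : Set (Euc d)} (f : Euc d → ℝ) {c : ℝ}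
    (hc : ∀ p ∈ fixedBoundary w, c ≤ f p) {α : Type} [MeasurableSpace α] (μ : Measure α)
    [IsProbabilityMeasure μ] (g : α → Euc d) (hg : ∀ u, g u ∈ fixedBoundary w) :
    (∫⁻ u, erealToENNReal (-((f (g u) : ℝ) : EReal)) ∂μ) ≠ ⊤ := by
  have hb : ∀ u, erealToENNReal (-((f (g u) : ℝ) : EReal)) ≤ ENNReal.ofReal (-c) := by
    intro u
    rw [erealToENNReal_neg_coe]
    exact ENNReal.ofReal_le_ofReal (by linarith [hc _ (hg u)])
  have : (∫⁻ u, erealToENNReal (-((f (g u) : ℝ) : EReal)) ∂μ) ≤ ENNReal.ofReal (-c) := by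
    calc (∫⁻ u, erealToENNReal (-((f (g u) : ℝ) : EReal)) ∂μ)
        ≤ ∫⁻ _, ENNReal.ofReal (-c) ∂μ := lintegral_mono hb
      _ = ENNReal.ofReal (-c) := by rw [lintegral_const, measure_univ, mul_one]
  exact ne_top_of_le_ne_top ENNReal.ofReal_ne_top this

lemma martBellman_ge {d : ℕ} (w : Set (Euc d)) (hw : IsClosed w) (f : Euc d → ℝ)
    (x : Euc d) (hx : x ∈ fixedBoundary w) : ((f x : ℝ) : EReal) ≤ martBellman w f x := by
  have hxw : x ∈ w := by
    have h1 : x ∈ closure w := frontier_subset_closure hx.1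
    rwa [hw.closure_eq] at h1
  let Z : WMartingale w :=
    { α := Unit
      mα := inferInstance
      μ := Measure.dirac ()
      F := ⟨fun _ => ⊥, fun _ _ _ => le_rfl, fun _ => bot_le⟩
      M := fun _ _ => x
      Minf := fun _ => x
      isWMart := by
        refine ⟨inferInstance, fun n => bot_measurable_finite, rfl, fun n => measurable_const,
          integrable_const x, fun _ => hx, fun n => ?_, fun n σ hσ hne _ u hu => ?_⟩
        · have : (Measure.dirac ())[(fun _ => x) | (⊥ : MeasurableSpace Unit)] = fun _ => x :=
            condExp_const bot_le x
          exact (Filter.eventuallyEq_of_mem Filter.univ_mem (fun u _ => (congrFun this u).symm))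
        · have hσu : σ = Set.univ := by
            rcases MeasurableSpace.measurableSet_bot_iff.mp hσ with h | h
            · exact absurd h hne.ne_empty
            · exact h
          refine (convexHull_min ?_ (convex_singleton x)).trans (by simp [hxw])
          rintro p (hp | ⟨q, _, rfl⟩) <;> simp_all }
  have hZ0 : ∀ u : Z.α, Z.M 0 u = x := fun _ => rfl
  calc ((f x : ℝ) : EReal)
      = erealExp Z.μ (fun u => ((f (Z.Minf u) : ℝ) : EReal)) := (erealExp_const Z.μ (f x)).symm
    _ ≤ martBellman w f x := by
        refine le_iSup_of_le Z ?_
        exact le_iSup (fun _ : (∀ u : Z.α, Z.M 0 u = x) =>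
          erealExp Z.μ (fun u => ((f (Z.Minf u) : ℝ) : EReal))) hZ0

lemma glue_le {d : ℕ} (w : Set (Euc d)) {x y : Euc d} (hseg : segment ℝ x y ⊆ w)
    {a b : ℝ} (ha : 0 < a) (hb : 0 < b) (hab : a + b = 1) (f : Euc d → ℝ)
    {c : ℝ} (hc : ∀ p ∈ fixedBoundary w, c ≤ f p)
    (X Y : WMartingale w) (hX0 : ∀ u, X.M 0 u = x) (hY0 : ∀ u, Y.M 0 u = y) :
    (a : EReal) * @erealExp X.α X.mα X.μ (fun u => ((f (X.Minf u) : ℝ) : EReal)) +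
      (b : EReal) * @erealExp Y.α Y.mα Y.μ (fun u => ((f (Y.Minf u) : ℝ) : EReal)) ≤
      martBellman w f (a • x + b • y) := by
  classical
  letI mX := X.mα
  letI mY := Y.mα
  obtain ⟨hXprob, hXfin, hXbot, hXmeas, hXint, hXbd, hXcond, hXatom⟩ := X.isWMart
  obtain ⟨hYprob, hYfin, hYbot, hYmeas, hYint, hYbd, hYcond, hYatom⟩ := Y.isWMart
  haveI := hXprob; haveI := hYprob
  haveI : (MeasureTheory.ae X.μ).NeBot := ae_neBot.mpr (IsProbabilityMeasure.ne_zero X.μ)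
  haveI : (MeasureTheory.ae Y.μ).NeBot := ae_neBot.mpr (IsProbabilityMeasure.ne_zero Y.μ)
  set z := a • x + b • y with hz
  have embl : MeasurableEmbedding (@Sum.inl X.α Y.α) := measurableEmbedding_inl'
  have embr : MeasurableEmbedding (@Sum.inr X.α Y.α) := measurableEmbedding_inr'
  set μ : Measure (X.α ⊕ Y.α) :=
    ENNReal.ofReal a • Measure.map Sum.inl X.μ + ENNReal.ofReal b • Measure.map Sum.inr Y.μ
    with hμ
  haveI hprob : IsProbabilityMeasure μ := by
    constructor
    rw [hμ, Measure.add_apply, Measure.smul_apply, Measure.smul_apply,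
      Measure.map_apply measurable_inl MeasurableSet.univ,
      Measure.map_apply measurable_inr MeasurableSet.univ]
    simp only [Set.preimage_univ, measure_univ, smul_eq_mul, mul_one]
    rw [← ENNReal.ofReal_add ha.le hb.le, hab, ENNReal.ofReal_one]
  -- filtration
  set Gs : ℕ → MeasurableSpace (X.α ⊕ Y.α) :=
    fun n => match n with
      | 0 => ⊥
      | (k+1) => sumMS (X.F k) (Y.F k)
    with hGs
  have hGmono : Monotone Gs := by
    intro n m hnm
    match n, m with
    | 0, _ => exact bot_le
    | (k+1), (l+1) =>
      exact sumMS_mono (X.F.mono (Nat.succ_le_succ_iff.mp hnm))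
        (Y.F.mono (Nat.succ_le_succ_iff.mp hnm))
  have hGle : ∀ n, Gs n ≤ (inferInstance : MeasurableSpace (X.α ⊕ Y.α)) := by
    intro n
    match n with
    | 0 => exact bot_le
    | (k+1) => exact sumMS_mono (X.F.le k) (Y.F.le k)
  set G : Filtration ℕ (inferInstance : MeasurableSpace (X.α ⊕ Y.α)) := ⟨Gs, hGmono, hGle⟩
    with hG
  -- processes
  set M : ℕ → X.α ⊕ Y.α → Euc d :=
    fun n => match n with
      | 0 => fun _ => z
      | (k+1) => Sum.elim (X.M k) (Y.M k)
    with hM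
  set Minf : X.α ⊕ Y.α → Euc d := Sum.elim X.Minf Y.Minf with hMinf
  -- integrability transfer
  have hIntSum : ∀ g : X.α ⊕ Y.α → Euc d, Integrable (g ∘ Sum.inl) X.μ →
      Integrable (g ∘ Sum.inr) Y.μ → Integrable g μ := by
    intro g h1 h2
    exact Integrable.add_measure
      ((embl.integrable_map_iff.mpr h1).smul_measure ENNReal.ofReal_ne_top)
      ((embr.integrable_map_iff.mpr h2).smul_measure ENNReal.ofReal_ne_top)
  have hMinfInt : Integrable Minf μ :=
    hIntSum _ ((Sum.elim_comp_inl _ _).symm ▸ hXint) ((Sum.elim_comp_inr _ _).symm ▸ hYint)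
  have hXMn : ∀ n, Integrable (X.M n) X.μ :=
    fun n => integrable_condExp.congr (hXcond n).symm
  have hYMn : ∀ n, Integrable (Y.M n) Y.μ :=
    fun n => integrable_condExp.congr (hYcond n).symm
  have hMInt : ∀ n, Integrable (M n) μ := by
    intro n
    match n with
    | 0 => exact integrable_const z
    | (k+1) =>
      exact hIntSum _ ((Sum.elim_comp_inl _ _).symm ▸ hXMn k)
        ((Sum.elim_comp_inr _ _).symm ▸ hYMn k)
  -- splitting of integrals
  have hsplit_int : ∀ (g : X.α ⊕ Y.α → Euc d) (s : Set (X.α ⊕ Y.α)),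
      Integrable (g ∘ Sum.inl) X.μ → Integrable (g ∘ Sum.inr) Y.μ →
      ∫ u in s, g u ∂μ = a • (∫ u in Sum.inl ⁻¹' s, g (Sum.inl u) ∂X.μ) +
        b • ∫ u in Sum.inr ⁻¹' s, g (Sum.inr u) ∂Y.μ := by
    intro g s h1 h2
    have hres : μ.restrict s = ENNReal.ofReal a • (Measure.map Sum.inl X.μ).restrict s +
        ENNReal.ofReal b • (Measure.map Sum.inr Y.μ).restrict s := by
      rw [hμ, Measure.restrict_add, Measure.restrict_smul, Measure.restrict_smul]
    rw [hres, integral_add_measure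
        (((embl.integrable_map_iff.mpr h1).restrict).smul_measure ENNReal.ofReal_ne_top)
        (((embr.integrable_map_iff.mpr h2).restrict).smul_measure ENNReal.ofReal_ne_top),
      integral_smul_measure, integral_smul_measure, ENNReal.toReal_ofReal ha.le,
      ENNReal.toReal_ofReal hb.le, embl.setIntegral_map, embr.setIntegral_map]
  have hsplit_lint : ∀ g : X.α ⊕ Y.α → ℝ≥0∞,
      ∫⁻ u, g u ∂μ = ENNReal.ofReal a * (∫⁻ u, g (Sum.inl u) ∂X.μ) +
        ENNReal.ofReal b * ∫⁻ u, g (Sum.inr u) ∂Y.μ := by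
    intro g
    rw [hμ, lintegral_add_measure, lintegral_smul_measure, lintegral_smul_measure,
      embl.lintegral_map, embr.lintegral_map]
    simp only [smul_eq_mul]
  -- starting values
  have hXx : ∫ u, X.Minf u ∂X.μ = x := by
    have h0 := hXcond 0
    rw [hXbot, condExp_bot] at h0
    obtain ⟨u, hu⟩ := h0.exists
    rw [hX0 u] at hu
    exact hu.symm
  have hYy : ∫ u, Y.Minf u ∂Y.μ = y := by
    have h0 := hYcond 0
    rw [hYbot, condExp_bot] at h0
    obtain ⟨u, hu⟩ := h0.exists
    rw [hY0 u] at hu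
    exact hu.symm
  have hintMinf : ∫ u, Minf u ∂μ = z := by
    rw [← setIntegral_univ, hsplit_int Minf Set.univ
      ((Sum.elim_comp_inl _ _).symm ▸ hXint) ((Sum.elim_comp_inr _ _).symm ▸ hYint)]
    simp only [Set.preimage_univ]
    rw [setIntegral_univ, setIntegral_univ]
    show a • ∫ u, X.Minf u ∂X.μ + b • ∫ u, Y.Minf u ∂Y.μ = z
    rw [hXx, hYy]
  -- measurability
  have hMmeas : ∀ n, Measurable[G n] (M n) := by
    intro n
    match n with
    | 0 => exact measurable_const
    | (k+1) => exact measurable_sumElim' (hXmeas k) (hYmeas k)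
  -- conditional expectation property
  have hcondZ : ∀ n, M n =ᵐ[μ] μ[Minf | G n] := by
    intro n
    match n with
    | 0 =>
      have hbot : (G 0 : MeasurableSpace (X.α ⊕ Y.α)) = ⊥ := rfl
      rw [hbot, condExp_bot, hintMinf]
    | (k+1) =>
      refine ae_eq_condExp_of_forall_setIntegral_eq (G.le (k+1)) hMinfInt
        (fun s _ _ => (hMInt (k+1)).integrableOn) (fun s hs _ => ?_) ?_
      · obtain ⟨hs1, hs2⟩ := measurableSet_sumMS.mp hs
        rw [hsplit_int (M (k+1)) s ((Sum.elim_comp_inl _ _).symm ▸ hXMn k)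
            ((Sum.elim_comp_inr _ _).symm ▸ hYMn k),
          hsplit_int Minf s ((Sum.elim_comp_inl _ _).symm ▸ hXint)
            ((Sum.elim_comp_inr _ _).symm ▸ hYint)]
        have e1 : ∫ u in Sum.inl ⁻¹' s, X.M k u ∂X.μ = ∫ u in Sum.inl ⁻¹' s, X.Minf u ∂X.μ := by
          rw [setIntegral_congr_ae (X.F.le k _ hs1) ((hXcond k).mono fun u hu _ => hu)]
          exact setIntegral_condExp (X.F.le k) hXint hs1
        have e2 : ∫ u in Sum.inr ⁻¹' s, Y.M k u ∂Y.μ = ∫ u in Sum.inr ⁻¹' s, Y.Minf u ∂Y.μ := by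
          rw [setIntegral_congr_ae (Y.F.le k _ hs2) ((hYcond k).mono fun u hu _ => hu)]
          exact setIntegral_condExp (Y.F.le k) hYint hs2
        show a • (∫ u in Sum.inl ⁻¹' s, X.M k u ∂X.μ) + b • ∫ u in Sum.inr ⁻¹' s, Y.M k u ∂Y.μ =
          a • (∫ u in Sum.inl ⁻¹' s, X.Minf u ∂X.μ) + b • ∫ u in Sum.inr ⁻¹' s, Y.Minf u ∂Y.μ
        rw [e1, e2]
      · exact ((hMmeas (k+1)).stronglyMeasurable).aestronglyMeasurable
  -- finiteness of σ-algebras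
  have hGfin : ∀ n, {s : Set (X.α ⊕ Y.α) | MeasurableSet[G n] s}.Finite := by
    intro n
    match n with
    | 0 => exact bot_measurable_finite
    | (k+1) => exact sumMS_finite (hXfin k) (hYfin k)
  -- atoms
  have hbdZ : ∀ u, Minf u ∈ fixedBoundary w := by
    intro u; cases u with
    | inl v => exact hXbd v
    | inr v => exact hYbd v
  have hatomZ : ∀ n (σ : Set (X.α ⊕ Y.α)), MeasurableSet[G n] σ → σ.Nonempty →
      (∀ t : Set (X.α ⊕ Y.α), MeasurableSet[G n] t → t ⊆ σ → t = ∅ ∨ t = σ) →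
      ∀ u ∈ σ, convexHull ℝ ({M n u} ∪ (M (n+1)) '' σ) ⊆ w := by
    intro n σ hσ hne hatom u hu
    match n with
    | 0 =>
      have hσ' : MeasurableSet[(⊥ : MeasurableSpace (X.α ⊕ Y.α))] σ := hσ
      have hσu : σ = Set.univ := by
        rcases MeasurableSpace.measurableSet_bot_iff.mp hσ' with h | h
        · exact absurd h hne.ne_empty
        · exact h
      subst hσu
      refine (convexHull_min ?_ (convex_segment x y)).trans hseg
      rintro p (hp | ⟨q, -, rfl⟩)
      · rcases hp with rfl
        exact ⟨a, b, ha.le, hb.le, hab, rfl⟩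
      · cases q with
        | inl v =>
          show X.M 0 v ∈ segment ℝ x y
          rw [hX0 v]; exact left_mem_segment ℝ x y
        | inr v =>
          show Y.M 0 v ∈ segment ℝ x y
          rw [hY0 v]; exact right_mem_segment ℝ x y
    | (k+1) =>
      obtain ⟨h1, h2⟩ := measurableSet_sumMS.mp hσ
      cases u with
      | inl v =>
        have hvτ : v ∈ Sum.inl ⁻¹' σ := hu
        rcases hatom _ (measurableSet_sumMS_inl h1) (Set.image_preimage_subset _ _) with hl | hl
        · exact absurd (hl ▸ Set.mem_image_of_mem Sum.inl hvτ) (Set.notMem_empty _)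
        · have hsub : ∀ t : Set X.α, MeasurableSet[X.F k] t → t ⊆ Sum.inl ⁻¹' σ →
              t = ∅ ∨ t = Sum.inl ⁻¹' σ := by
            intro t ht hsubt
            rcases hatom (Sum.inl '' t) (measurableSet_sumMS_inl ht)
              (le_of_le_of_eq (Set.image_mono hsubt) hl) with h | h
            · exact Or.inl (Set.image_eq_empty.mp h)
            · right
              have himgs : Sum.inl '' t = Sum.inl '' (Sum.inl ⁻¹' σ) := h.trans hl.symm
              calc t = Sum.inl ⁻¹' (Sum.inl '' t) :=
                    (Set.preimage_image_eq _ Sum.inl_injective).symm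
                _ = Sum.inl ⁻¹' (Sum.inl '' (Sum.inl ⁻¹' σ)) := by rw [himgs]
                _ = Sum.inl ⁻¹' σ := Set.preimage_image_eq _ Sum.inl_injective
          have hkey := hXatom k (Sum.inl ⁻¹' σ) h1 ⟨v, hvτ⟩ hsub v hvτ
          have himg : M (k+1+1) '' σ = X.M (k+1) '' (Sum.inl ⁻¹' σ) := by
            conv_lhs => rw [← hl]
            rw [Set.image_image]
            rfl
          rw [himg]
          exact hkey
      | inr v =>
        have hvτ : v ∈ Sum.inr ⁻¹' σ := hu
        rcases hatom _ (measurableSet_sumMS_inr h2) (Set.image_preimage_subset _ _) with hl | hl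
        · exact absurd (hl ▸ Set.mem_image_of_mem Sum.inr hvτ) (Set.notMem_empty _)
        · have hsub : ∀ t : Set Y.α, MeasurableSet[Y.F k] t → t ⊆ Sum.inr ⁻¹' σ →
              t = ∅ ∨ t = Sum.inr ⁻¹' σ := by
            intro t ht hsubt
            rcases hatom (Sum.inr '' t) (measurableSet_sumMS_inr ht)
              (le_of_le_of_eq (Set.image_mono hsubt) hl) with h | h
            · exact Or.inl (Set.image_eq_empty.mp h)
            · right
              have himgs : Sum.inr '' t = Sum.inr '' (Sum.inr ⁻¹' σ) := h.trans hl.symm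
              calc t = Sum.inr ⁻¹' (Sum.inr '' t) :=
                    (Set.preimage_image_eq _ Sum.inr_injective).symm
                _ = Sum.inr ⁻¹' (Sum.inr '' (Sum.inr ⁻¹' σ)) := by rw [himgs]
                _ = Sum.inr ⁻¹' σ := Set.preimage_image_eq _ Sum.inr_injective
          have hkey := hYatom k (Sum.inr ⁻¹' σ) h2 ⟨v, hvτ⟩ hsub v hvτ
          have himg : M (k+1+1) '' σ = Y.M (k+1) '' (Sum.inr ⁻¹' σ) := by
            conv_lhs => rw [← hl]
            rw [Set.image_image]
            rfl
          rw [himg]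
          exact hkey
  set Z : WMartingale w := ⟨X.α ⊕ Y.α, inferInstance, μ, G, M, Minf,
    hprob, hGfin, rfl, hMmeas, hMinfInt, hbdZ, hcondZ, hatomZ⟩ with hZ
  -- expectation computation
  have hNX := negpart_lintegral_ne_top f hc X.μ X.Minf hXbd
  have hNY := negpart_lintegral_ne_top f hc Y.μ Y.Minf hYbd
  have hPE : erealExp μ (fun u => ((f (Minf u) : ℝ) : EReal)) =
      (a : EReal) * erealExp X.μ (fun u => ((f (X.Minf u) : ℝ) : EReal)) +
        (b : EReal) * erealExp Y.μ (fun u => ((f (Y.Minf u) : ℝ) : EReal)) := by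
    unfold erealExp
    rw [hsplit_lint, hsplit_lint]
    exact ereal_split_arith ha hb hNX hNY
  have hZ0 : ∀ u : Z.α, Z.M 0 u = z := fun _ => rfl
  refine le_trans (le_of_eq hPE.symm) ?_
  refine le_iSup_of_le Z ?_
  exact le_iSup (fun _ : (∀ u : Z.α, Z.M 0 u = z) =>
    erealExp Z.μ (fun u => ((f (Z.Minf u) : ℝ) : EReal))) hZ0

lemma erealExp_wmart_bot_lt {d : ℕ} {w : Set (Euc d)} (f : Euc d → ℝ) {c : ℝ}
    (hc : ∀ p ∈ fixedBoundary w, c ≤ f p) (X : WMartingale w) :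
    ⊥ < @erealExp X.α X.mα X.μ (fun u => ((f (X.Minf u) : ℝ) : EReal)) := by
  letI := X.mα
  obtain ⟨hprob, -, -, -, -, hbd, -, -⟩ := X.isWMart
  haveI := hprob
  exact erealExp_bot_lt _ _ (negpart_lintegral_ne_top f hc X.μ X.Minf hbd)

end Helpers

/-- Let `w ⊆ ℝ^d` be a strongly martingale connected closed set and let
`f : ∂_fixed w → ℝ` be bounded from below. Then `ℬ_{w,f} ∈ Λ_{w,f}`: it is locally concave
on `w` and `ℬ_{w,f} ≥ f` on the fixed boundary. -/
theorem stmt6 {d : ℕ} (w : Set (Euc d)) (hw : IsClosed w)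
    (hconn : StronglyMartingaleConnected w) (f : Euc d → ℝ)
    (hbdd : ∃ c : ℝ, ∀ x ∈ fixedBoundary w, c ≤ f x) :
    martBellman w f ∈ Lambda w (fun x => (f x : EReal)) := by
  obtain ⟨c, hc⟩ := hbdd
  constructor
  · intro x hx y hy hseg a b ha hb hab
    rcases ha.eq_or_lt with ha0 | ha0
    · have hb1 : b = 1 := by linarith
      subst hb1
      rw [← ha0]
      simp only [EReal.coe_zero, zero_mul, EReal.coe_one, one_mul, zero_add, zero_smul, one_smul]
      exact le_rfl
    · rcases hb.eq_or_lt with hb0 | hb0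
      · have ha1 : a = 1 := by linarith
        subst ha1
        rw [← hb0]
        simp only [EReal.coe_zero, zero_mul, EReal.coe_one, one_mul, add_zero, zero_smul,
          one_smul]
        exact le_rfl
      · -- main case
        haveI hnex : Nonempty {X : WMartingale w // ∀ u, X.M 0 u = x} := by
          obtain ⟨X, -, h0⟩ := hconn x hx; exact ⟨⟨X, h0⟩⟩
        haveI hney : Nonempty {X : WMartingale w // ∀ u, X.M 0 u = y} := by
          obtain ⟨X, -, h0⟩ := hconn y hy; exact ⟨⟨X, h0⟩⟩
        have ex : martBellman w f x = ⨆ i : {X : WMartingale w // ∀ u, X.M 0 u = x},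
            @erealExp i.1.α i.1.mα i.1.μ (fun u => ((f (i.1.Minf u) : ℝ) : EReal)) :=
          iSup_subtype'
        have ey : martBellman w f y = ⨆ i : {X : WMartingale w // ∀ u, X.M 0 u = y},
            @erealExp i.1.α i.1.mα i.1.μ (fun u => ((f (i.1.Minf u) : ℝ) : EReal)) :=
          iSup_subtype'
        rw [ex, ey, ereal_mul_iSup _ ha0, ereal_mul_iSup _ hb0]
        refine ereal_add_iSup_le
          (fun i => ereal_mul_bot_lt ha0 (erealExp_wmart_bot_lt f hc i.1))
          (fun j => ereal_mul_bot_lt hb0 (erealExp_wmart_bot_lt f hc j.1)) ?_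
        intro i j
        exact glue_le w hseg ha0 hb0 hab f hc i.1 j.1 i.2 j.2
  · intro p hp
    exact martBellman_ge w hw f p hp
end
end

section
/- Let Ω₀ be a nonempty open convex subset of ℝ² that does not contain any line, let Ω₁ be an open convex subset of ℝ² with cl Ω₁ ⊆ Ω₀, set Ω = cl Ω₀ \ Ω₁, and assume Ω satisfies conditions (1) and (3). Then the Bellman function for the boundary function f(x) = |x| is finite: for every x ∈ Ω, B_{Ω,|·|}(x) = sup{⟨|φ|⟩_I : φ ∈ A_Ω, ⟨φ⟩_I = x} < ∞; moreover B_{Ω,|·|} is bounded on every compact subset of Ω. In fact, there is an affine function L on ℝ² with B_{Ω,|·|}(x) ≤ L(x) for all x ∈ Ω. -/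
open Set MeasureTheory
open scoped ENNReal

noncomputable section

/-- The set `s` contains no (full) line. -/
def ContainsNoLine (s : Set (Euc 2)) : Prop :=
  ¬ ∃ x v : Euc 2, v ≠ 0 ∧ ∀ t : ℝ, x + t • v ∈ s

/-- The boundary of `s` contains no nondegenerate line segment. -/
def NoSegBoundary (s : Set (Euc 2)) : Prop :=
  ¬ ∃ y z : Euc 2, y ≠ z ∧ segment ℝ y z ⊆ frontier s

/-- Condition (1): neither `∂Ω₀` nor `∂Ω₁` contains a line segment. -/
def Cond1 (Ω₀ Ω₁ : Set (Euc 2)) : Prop := NoSegBoundary Ω₀ ∧ NoSegBoundary Ω₁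

/-- The boundary of `s` is a `C²`-smooth curve: near each of its points it admits a regular
`C²` parametrization. -/
def C2SmoothBoundary (s : Set (Euc 2)) : Prop :=
  ∀ x ∈ frontier s, ∃ (ε : ℝ) (γ : ℝ → Euc 2), 0 < ε ∧ ContDiff ℝ 2 γ ∧
    (∀ t : ℝ, deriv γ t ≠ 0) ∧ γ 0 = x ∧ γ '' Ioo (-ε) ε = frontier s ∩ Metric.ball x ε

/-- Condition (3): `Ω₀` is unbounded and every ray contained in `Ω₀` can be translated so
as to lie entirely inside `Ω₁`. -/
def Cond3 (Ω₀ Ω₁ : Set (Euc 2)) : Prop :=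
  (¬ Bornology.IsBounded Ω₀) ∧
  ∀ x v : Euc 2, v ≠ 0 → (∀ t : ℝ, 0 ≤ t → x + t • v ∈ Ω₀) →
    ∃ y : Euc 2, ∀ t : ℝ, 0 ≤ t → y + t • v ∈ Ω₁

/-- The class `A_Ω` on the interval `[a, b]`: summable functions with values in `∂Ω₀`
whose average over every subinterval stays out of `Ω₁`. -/
def classA (Ω₀ Ω₁ : Set (Euc 2)) (a b : ℝ) (φ : ℝ → Euc 2) : Prop :=
  MeasureTheory.IntegrableOn φ (Set.Icc a b) ∧
  (∀ t ∈ Set.Icc a b, φ t ∈ frontier Ω₀) ∧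
  ∀ c e : ℝ, a ≤ c → c < e → e ≤ b → (⨍ t in Set.Icc c e, φ t ∂volume) ∉ Ω₁

/-- `Ω̃₁` determines an extension `cl Ω₀ \ Ω̃₁` of `Ω = cl Ω₀ \ Ω₁`. -/
def IsExtension (Ω₀ Ω₁ Ωt₁ : Set (Euc 2)) : Prop :=
  IsOpen Ωt₁ ∧ Convex ℝ Ωt₁ ∧ closure Ωt₁ ⊆ Ω₁ ∧ Cond1 Ω₀ Ωt₁ ∧ Cond3 Ω₀ Ωt₁

/-- Average over `[0,1]` of a real function, with values in the extended reals: the difference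
of the unsigned integrals of its positive and negative parts (the interval `[0,1]` has unit
length, so no normalization is needed). -/
def avgE (Y : ℝ → ℝ) : EReal :=
  ((∫⁻ t in Set.Icc (0:ℝ) 1, ENNReal.ofReal (Y t) : ℝ≥0∞) : EReal) -
    ((∫⁻ t in Set.Icc (0:ℝ) 1, ENNReal.ofReal (-(Y t)) : ℝ≥0∞) : EReal)

/-- The Bellman function `B_{Ω,f}(x) = sup {⟨f ∘ φ⟩_I : φ ∈ A_Ω, ⟨φ⟩_I = x}`, computed on
the interval `I = [0,1]` (it does not depend on the choice of the interval). -/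
def bellman (Ω₀ Ω₁ : Set (Euc 2)) (f : Euc 2 → ℝ) (x : Euc 2) : EReal :=
  ⨆ (φ : ℝ → Euc 2) (_ : classA Ω₀ Ω₁ 0 1 φ)
      (_ : (⨍ t in Set.Icc (0:ℝ) 1, φ t ∂volume) = x),
    avgE fun t => f (φ t)


open scoped RealInnerProductSpace

lemma euc2_eq_zero {e : Euc 2} (h0 : e 0 = 0) (h1 : e 1 = 0) : e = 0 := by
  ext i; fin_cases i <;> simpa

lemma perp_mem_span {e v : Euc 2} (he : e ≠ 0) (hv : ⟪e, v⟫ = 0) :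
    v = ((e 0 * v 1 - e 1 * v 0)/(e 0^2 + e 1^2)) •
        ((WithLp.equiv 2 (Fin 2 → ℝ)).symm ![-(e 1), e 0]) := by
  have hne : e 0 ^ 2 + e 1 ^ 2 ≠ 0 := by
    intro h
    have h0 : e 0 = 0 := by nlinarith [sq_nonneg (e 0), sq_nonneg (e 1)]
    have h1 : e 1 = 0 := by nlinarith [sq_nonneg (e 0), sq_nonneg (e 1)]
    exact he (euc2_eq_zero h0 h1)
  have hinner : e 0 * v 0 + e 1 * v 1 = 0 := by
    have h' := hv
    simp [PiLp.inner_apply, Fin.sum_univ_two, RCLike.inner_apply, conj_trivial] at h'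
    linarith
  ext i
  fin_cases i
  · simp only [PiLp.smul_apply, WithLp.equiv_symm_apply, WithLp.ofLp_toLp, Fin.zero_eta, Fin.mk_one, smul_eq_mul,
        Matrix.cons_val_zero, Matrix.cons_val_one, Matrix.head_cons]
    field_simp
    linear_combination (e 0) * hinner
  · simp only [PiLp.smul_apply, WithLp.equiv_symm_apply, WithLp.ofLp_toLp, Fin.zero_eta, Fin.mk_one, smul_eq_mul,
        Matrix.cons_val_zero, Matrix.cons_val_one, Matrix.head_cons]
    field_simp
    linear_combination (e 1) * hinner

lemma norm_perp (e : Euc 2) :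
    ‖((WithLp.equiv 2 (Fin 2 → ℝ)).symm ![-(e 1), e 0] : Euc 2)‖ = ‖e‖ := by
  rw [EuclideanSpace.norm_eq, EuclideanSpace.norm_eq]
  congr 1
  simp [Fin.sum_univ_two, WithLp.equiv_symm_apply]
  ring

/-- Recession-type cone of `C` based at `p`. -/
def rcone (p : Euc 2) (C : Set (Euc 2)) : Set (Euc 2) :=
  {v | ∀ t : ℝ, 0 ≤ t → p + t • v ∈ C}

lemma rcone_closed (p : Euc 2) {C : Set (Euc 2)} (hC : IsClosed C) : IsClosed (rcone p C) := by
  have h : rcone p C = ⋂ (t : {t : ℝ // 0 ≤ t}), (fun v : Euc 2 => p + (t : ℝ) • v) ⁻¹' C := by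
    ext v
    simp [rcone, Set.mem_iInter, Subtype.forall]
  rw [h]
  exact isClosed_iInter fun t => hC.preimage (by fun_prop)

lemma rcone_zero {p : Euc 2} {C : Set (Euc 2)} (hp : p ∈ C) : (0 : Euc 2) ∈ rcone p C := by
  intro t ht; simpa using hp

lemma rcone_smul {p : Euc 2} {C : Set (Euc 2)} {v : Euc 2} (hv : v ∈ rcone p C) {s : ℝ}
    (hs : 0 ≤ s) : s • v ∈ rcone p C := by
  intro t ht
  rw [smul_smul]
  exact hv _ (mul_nonneg ht hs)

lemma rcone_convex {p : Euc 2} {C : Set (Euc 2)} (hC : Convex ℝ C) : Convex ℝ (rcone p C) := by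
  intro v hv w hw a b ha hb hab t ht
  have h1 := hv t ht
  have h2 := hw t ht
  have := hC h1 h2 ha hb hab
  convert this using 1
  match_scalars <;> simp <;> ring_nf <;> nlinarith [hab]

lemma rcone_pointed {Ω₀ : Set (Euc 2)} (h0open : IsOpen Ω₀) (h0conv : Convex ℝ Ω₀)
    (h0line : ContainsNoLine Ω₀) {p : Euc 2} (hp : p ∈ Ω₀) {v : Euc 2}
    (hv : v ∈ rcone p (closure Ω₀)) (hv' : -v ∈ rcone p (closure Ω₀)) : v = 0 := by
  by_contra hne
  apply h0line
  refine ⟨p, v, hne, fun t => ?_⟩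
  have h2t : p + (2 * t) • v ∈ closure Ω₀ := by
    rcases le_or_gt 0 t with ht | ht
    · exact hv _ (by linarith)
    · have := hv' (2 * (-t)) (by linarith)
      have he : p + (2 * -t) • -v = p + (2 * t) • v := by module
      rwa [he] at this
  have hmem : (1/2 : ℝ) • p + (1/2 : ℝ) • (p + (2*t) • v) ∈ interior Ω₀ :=
    h0conv.combo_interior_closure_mem_interior (by rwa [h0open.interior_eq]) h2t
      (by norm_num) (by norm_num) (by norm_num)
  have he2 : (1/2 : ℝ) • p + (1/2 : ℝ) • (p + (2*t) • v) = p + t • v := by module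
  rw [he2, h0open.interior_eq] at hmem
  exact hmem

lemma exists_pos_functional {Ω₀ : Set (Euc 2)} (h0open : IsOpen Ω₀) (h0conv : Convex ℝ Ω₀)
    (h0line : ContainsNoLine Ω₀) {p : Euc 2} (hp : p ∈ Ω₀) :
    ∃ (e : Euc 2) (δ : ℝ), 0 < δ ∧
      ∀ v ∈ rcone p (closure Ω₀) ∩ Metric.sphere (0 : Euc 2) 1, δ ≤ ⟪e, v⟫ := by
  classical
  set K := rcone p (closure Ω₀) with hKdef
  set S := K ∩ Metric.sphere (0 : Euc 2) 1 with hSdef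
  have hKclosed : IsClosed K := rcone_closed p isClosed_closure
  have hKconv : Convex ℝ K := rcone_convex (h0conv.closure)
  have hScomp : IsCompact S := (isCompact_sphere 0 1).inter_left hKclosed
  by_cases hS : S.Nonempty
  swap
  · exact ⟨0, 1, one_pos, fun v hv => absurd ⟨v, hv⟩ hS⟩
  obtain ⟨u₀, hu₀K, hu₀s⟩ := hS
  have hu₀n : ‖u₀‖ = 1 := by simpa using hu₀s
  have hpointed : ∀ v : Euc 2, v ∈ K → -v ∈ K → v = 0 := fun v hv hv' =>
    rcone_pointed h0open h0conv h0line hp hv hv'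
  have hqK : -u₀ ∉ K := by
    intro h
    have := hpointed u₀ hu₀K h
    rw [this] at hu₀n
    simp at hu₀n
  -- project q := -u₀ onto K
  obtain ⟨r, hrK, hr⟩ := exists_norm_eq_iInf_of_complete_convex ⟨u₀, hu₀K⟩
    hKclosed.isComplete hKconv (-u₀)
  have hproj : ∀ w ∈ K, ⟪-u₀ - r, w - r⟫ ≤ 0 :=
    (norm_eq_iInf_iff_real_inner_le_zero hKconv hrK).1 hr
  set e₀ : Euc 2 := -u₀ - r with he₀def
  have he₀ : e₀ ≠ 0 := sub_ne_zero.2 (fun h => hqK (h ▸ hrK))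
  have hr0 : ⟪e₀, r⟫ = 0 := by
    have h2 := hproj ((2:ℝ) • r) (rcone_smul hrK (by norm_num))
    have h0 := hproj 0 (rcone_zero (subset_closure hp))
    have e2 : (2:ℝ) • r - r = r := by module
    rw [e2] at h2
    rw [zero_sub, inner_neg_right] at h0
    linarith
  have hKle : ∀ w ∈ K, ⟪e₀, w⟫ ≤ 0 := by
    intro w hw
    have := hproj w hw
    rw [inner_sub_right] at this
    linarith [hr0]
  -- the perpendicular direction
  set w₁ : Euc 2 := (WithLp.equiv 2 (Fin 2 → ℝ)).symm ![-(e₀ 1), e₀ 0] with hw₁def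
  have hnw₁ : ‖w₁‖ = ‖e₀‖ := norm_perp e₀
  have hne₀ : ‖e₀‖ ≠ 0 := norm_ne_zero_iff.2 he₀
  set what : Euc 2 := ‖e₀‖⁻¹ • w₁ with hwhatdef
  have hwhatn : ‖what‖ = 1 := by
    rw [hwhatdef, norm_smul, norm_inv, norm_norm, hnw₁]
    exact inv_mul_cancel₀ hne₀
  set w' : Euc 2 := if -what ∈ K then -what else what with hw'def
  have hw'n : ‖w'‖ = 1 := by
    rw [hw'def]; split_ifs <;> simp [hwhatn]
  have hker : ∀ v : Euc 2, ‖v‖ = 1 → ⟪e₀, v⟫ = 0 → v ∈ K → v = w' := by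
    intro v hvn hvperp hvK
    have hv := perp_mem_span he₀ hvperp
    rw [← hw₁def] at hv
    set c : ℝ := (e₀ 0 * v 1 - e₀ 1 * v 0) / (e₀ 0 ^ 2 + e₀ 1 ^ 2) with hcdef
    have hvwhat : v = (c * ‖e₀‖) • what := by
      rw [hwhatdef, smul_smul, mul_assoc, mul_inv_cancel₀ hne₀, mul_one, hv]
    have habs : |c * ‖e₀‖| = 1 := by
      have h := hvwhat
      have : ‖v‖ = |c * ‖e₀‖| * ‖what‖ := by rw [h, norm_smul, Real.norm_eq_abs]
      rw [hvn, hwhatn, mul_one] at this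
      linarith
    rcases (abs_eq (by norm_num : (0:ℝ) ≤ 1)).1 habs with h1 | h1
    · -- v = what ; show w' = what, i.e. -what ∉ K
      rw [h1, one_smul] at hvwhat
      rw [hw'def, if_neg]
      · exact hvwhat
      · intro hmem
        have : what = 0 := hpointed what (hvwhat ▸ hvK) hmem
        rw [this] at hwhatn
        simp at hwhatn
    · -- v = -what ∈ K, so the if-condition holds
      rw [h1] at hvwhat
      have hv' : v = -what := by rw [hvwhat]; module
      rw [hw'def, if_pos (hv' ▸ hvK)]
      exact hv'
  -- perturbation step
  have hpert : ∃ m : ℕ, ∀ v ∈ S, 0 < (1/(m+1) : ℝ) * ⟪w', v⟫ - ⟪e₀, v⟫ := by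
    by_contra hcon
    push_neg at hcon
    choose v hvS hvle using hcon
    obtain ⟨u, huS, ψ, hψ, hlim⟩ := hScomp.tendsto_subseq hvS
    have hun : ‖u‖ = 1 := by simpa using huS.2
    have hvmem : ∀ n, v n ∈ K := fun n => (hvS n).1
    have hvn : ∀ n, ‖v n‖ = 1 := fun n => by simpa using (hvS n).2
    have hie : ∀ n, ⟪e₀, v n⟫ ≤ 0 := fun n => hKle _ (hvmem n)
    have hibound : ∀ n : ℕ, -(1/(n+1) : ℝ) ≤ ⟪e₀, v n⟫ := by
      intro n
      have h1 : |⟪w', v n⟫| ≤ 1 := by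
        have := abs_real_inner_le_norm w' (v n)
        rwa [hw'n, hvn n, one_mul] at this
      have h2 := hvle n
      have h3 : (0:ℝ) < 1/(n+1) := by positivity
      nlinarith [neg_abs_le (⟪w', v n⟫), h1]
    have hiw : ∀ n, ⟪w', v n⟫ ≤ 0 := by
      intro n
      have h2 := hvle n
      have h3 : (0:ℝ) < 1/(n+1) := by positivity
      nlinarith [hie n]
    have htend : Filter.Tendsto (fun n => ⟪e₀, v (ψ n)⟫) Filter.atTop (nhds ⟪e₀, u⟫) :=
      Filter.Tendsto.inner tendsto_const_nhds hlim
    have hzero : ⟪e₀, u⟫ = 0 := by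
      have hlow : Filter.Tendsto (fun n : ℕ => -(1/(n+1) : ℝ)) Filter.atTop (nhds 0) := by
        have := tendsto_one_div_add_atTop_nhds_zero_nat (𝕜 := ℝ)
        simpa using this.neg
      have hsq : Filter.Tendsto (fun n => ⟪e₀, v (ψ n)⟫) Filter.atTop (nhds 0) := by
        apply tendsto_of_tendsto_of_tendsto_of_le_of_le hlow tendsto_const_nhds
        · intro n
          calc -(1/(n+1) : ℝ) ≤ -(1/(ψ n+1) : ℝ) := by
                have := hψ.le_apply (x := n)
                have hn : (n : ℝ) ≤ ψ n := by exact_mod_cast this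
                have h1 : (0:ℝ) < n + 1 := by positivity
                have h2 : (0:ℝ) < ψ n + 1 := by positivity
                rw [neg_le_neg_iff]
                apply div_le_div_of_nonneg_left (by norm_num) h1 (by linarith)
            _ ≤ ⟪e₀, v (ψ n)⟫ := hibound (ψ n)
        · intro n; exact hie (ψ n)
      exact tendsto_nhds_unique htend hsq
    have huK : u ∈ K := huS.1
    have huw : u = w' := hker u hun hzero huK
    have htw : Filter.Tendsto (fun n => ⟪w', v (ψ n)⟫) Filter.atTop (nhds ⟪w', u⟫) :=
      Filter.Tendsto.inner tendsto_const_nhds hlim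
    have : ⟪w', u⟫ ≤ 0 := le_of_tendsto htw (Filter.Eventually.of_forall fun n => hiw (ψ n))
    rw [huw, real_inner_self_eq_norm_sq, hw'n] at this
    norm_num at this
  obtain ⟨m, hm⟩ := hpert
  set e : Euc 2 := (1/(m+1) : ℝ) • w' - e₀ with hedef
  have hpos : ∀ v ∈ S, 0 < ⟪e, v⟫ := by
    intro v hv
    have := hm v hv
    rw [hedef, inner_sub_left, real_inner_smul_left]
    linarith
  obtain ⟨v₀, hv₀S, hmin⟩ := hScomp.exists_isMinOn (f := fun v : Euc 2 => (⟪e, v⟫ : ℝ))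
    ⟨u₀, hu₀K, hu₀s⟩ ((continuous_const.inner continuous_id).continuousOn)
  exact ⟨e, ⟪e, v₀⟫, hpos _ hv₀S, fun v hv => hmin hv⟩

lemma exists_affine_norm_bound {Ω₀ : Set (Euc 2)} (h0ne : Ω₀.Nonempty) (h0open : IsOpen Ω₀)
    (h0conv : Convex ℝ Ω₀) (h0line : ContainsNoLine Ω₀) :
    ∃ (e : Euc 2) (a c : ℝ), ∀ x ∈ closure Ω₀, ‖x‖ ≤ a * ⟪e, x⟫ + c := by
  obtain ⟨p, hp⟩ := h0ne
  obtain ⟨e, δ, hδ, hSe⟩ := exists_pos_functional h0open h0conv h0line hp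
  have hgrow : ∃ R : ℝ, 0 < R ∧ ∀ x ∈ closure Ω₀, R ≤ ‖x‖ → δ/2 * ‖x‖ ≤ ⟪e, x⟫ := by
    by_contra hcon
    push_neg at hcon
    choose x hx hnx hix using fun n : ℕ => hcon (n+1) (by positivity)
    have hbig : ∀ n : ℕ, (n+1 : ℝ) ≤ ‖x n‖ := hnx
    have hxpos : ∀ n : ℕ, 0 < ‖x n‖ := fun n => lt_of_lt_of_le (by positivity) (hbig n)
    set u : ℕ → Euc 2 := fun n => ‖x n‖⁻¹ • x n with hudef
    have hu : ∀ n, u n ∈ Metric.sphere (0 : Euc 2) 1 := by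
      intro n
      rw [mem_sphere_zero_iff_norm, hudef]
      rw [norm_smul, norm_inv, norm_norm]
      exact inv_mul_cancel₀ (hxpos n).ne'
    obtain ⟨v, hvsph, ψ, hψ, hlim⟩ := (isCompact_sphere (0:Euc 2) 1).tendsto_subseq hu
    have hψle : ∀ n : ℕ, (n : ℝ) ≤ ψ n := fun n => by exact_mod_cast hψ.le_apply
    have hθ : Filter.Tendsto (fun n : ℕ => ‖x (ψ n)‖⁻¹) Filter.atTop (nhds 0) := by
      apply tendsto_of_tendsto_of_tendsto_of_le_of_le (g := fun _ : ℕ => (0:ℝ))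
        (h := fun n : ℕ => (1/(n+1) : ℝ)) tendsto_const_nhds
        tendsto_one_div_add_atTop_nhds_zero_nat
      · intro n; positivity
      · intro n
        rw [inv_le_comm₀ (hxpos (ψ n)) (by positivity)]
        show ((1:ℝ)/(n+1))⁻¹ ≤ ‖x (ψ n)‖
        rw [one_div, inv_inv]
        calc (n+1 : ℝ) ≤ ψ n + 1 := by linarith [hψle n]
          _ ≤ ‖x (ψ n)‖ := hbig (ψ n)
    have hvK : v ∈ rcone p (closure Ω₀) := by
      intro t ht
      set c : ℕ → Euc 2 := fun n => p + (t * ‖x (ψ n)‖⁻¹) • (x (ψ n) - p) with hcdef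
      have hcmem : ∀ᶠ n in Filter.atTop, c n ∈ closure Ω₀ := by
        filter_upwards [Filter.eventually_ge_atTop ⌈t⌉₊] with n hn
        have hθn : 0 ≤ t * ‖x (ψ n)‖⁻¹ := by positivity
        have hθn1 : t * ‖x (ψ n)‖⁻¹ ≤ 1 := by
          have hxn : t ≤ ‖x (ψ n)‖ := by
            calc t ≤ ⌈t⌉₊ := Nat.le_ceil t
              _ ≤ n := by exact_mod_cast hn
              _ ≤ n + 1 := by linarith
              _ ≤ ψ n + 1 := by linarith [hψle n]
              _ ≤ ‖x (ψ n)‖ := hbig (ψ n)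
          calc t * ‖x (ψ n)‖⁻¹ ≤ ‖x (ψ n)‖ * ‖x (ψ n)‖⁻¹ :=
                mul_le_mul_of_nonneg_right hxn (inv_nonneg.2 (norm_nonneg _))
            _ = 1 := mul_inv_cancel₀ (hxpos (ψ n)).ne'
        have := (h0conv.closure) (subset_closure hp) (hx (ψ n))
          (a := 1 - t * ‖x (ψ n)‖⁻¹) (b := t * ‖x (ψ n)‖⁻¹)
          (by linarith) hθn (by ring)
        convert this using 1
        rw [hcdef]
        module
      have hctend : Filter.Tendsto c Filter.atTop (nhds (p + t • v)) := by
        have h1 : ∀ n, c n = p + t • u (ψ n) - (t * ‖x (ψ n)‖⁻¹) • p := by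
          intro n
          rw [hcdef, hudef]
          simp only [smul_sub, smul_smul]
          module
        rw [funext h1]
        have h2 : Filter.Tendsto (fun n => t • u (ψ n)) Filter.atTop (nhds (t • v)) := by
          have := hlim.const_smul t
          exact this
        have h3 : Filter.Tendsto (fun n => (t * ‖x (ψ n)‖⁻¹) • p) Filter.atTop
            (nhds (0 : Euc 2)) := by
          simpa using (hθ.const_mul t).smul_const p
        have := ((tendsto_const_nhds (x := p)).add h2).sub h3
        simpa using this
      exact isClosed_closure.mem_of_tendsto hctend hcmem
    have hvS : δ ≤ ⟪e, v⟫ := hSe v ⟨hvK, hvsph⟩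
    have hub : ∀ n, ⟪e, u n⟫ ≤ δ/2 := by
      intro n
      rw [hudef]
      simp only [real_inner_smul_right]
      have h1 := (hix n).le
      have h2 : 0 < ‖x n‖ := hxpos n
      calc ‖x n‖⁻¹ * ⟪e, x n⟫ ≤ ‖x n‖⁻¹ * (δ/2 * ‖x n‖) := by
            apply mul_le_mul_of_nonneg_left h1 (by positivity)
        _ = δ/2 := by field_simp
    have htend : Filter.Tendsto (fun n => ⟪e, u (ψ n)⟫) Filter.atTop (nhds ⟪e, v⟫) :=
      Filter.Tendsto.inner tendsto_const_nhds hlim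
    have : ⟪e, v⟫ ≤ δ/2 := le_of_tendsto htend (Filter.Eventually.of_forall fun n => hub (ψ n))
    linarith
  obtain ⟨R, hR, hgr⟩ := hgrow
  refine ⟨e, 2/δ, R + 2/δ * ‖e‖ * R, fun x hx => ?_⟩
  have hep : (0:ℝ) < 2/δ := by positivity
  rcases le_or_gt ‖x‖ R with h | h
  · have h1 : -(‖e‖ * ‖x‖) ≤ ⟪e, x⟫ := by
      have := abs_real_inner_le_norm e x
      have := neg_abs_le (⟪e, x⟫ : ℝ)
      linarith
    nlinarith [norm_nonneg e, norm_nonneg x, mul_le_mul_of_nonneg_left h (norm_nonneg e)]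
  · have h1 := hgr x hx h.le
    have h2 : ‖x‖ ≤ 2/δ * ⟪e, x⟫ := by
      rw [← mul_le_mul_iff_of_pos_left (show (0:ℝ) < δ/2 by positivity)]
      calc δ/2 * ‖x‖ ≤ ⟪e, x⟫ := h1
        _ = δ/2 * (2/δ * ⟪e, x⟫) := by field_simp
    have h3 : 0 ≤ 2/δ * ‖e‖ * R := by positivity
    linarith


def Lmap (e : Euc 2) (a c : ℝ) : Euc 2 →ᵃ[ℝ] ℝ where
  toFun x := a * ⟪e, x⟫ + c
  linear :=
    { toFun := fun v => a * ⟪e, v⟫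
      map_add' := fun v w => by
        show a * ⟪e, v + w⟫ = a * ⟪e, v⟫ + a * ⟪e, w⟫
        rw [inner_add_right]; ring
      map_smul' := fun r v => by
        show a * ⟪e, r • v⟫ = (RingHom.id ℝ) r • (a * ⟪e, v⟫)
        rw [real_inner_smul_right]; simp; ring }
  map_vadd' p v := by
    show a * ⟪e, v + p⟫ + c = a * ⟪e, v⟫ + (a * ⟪e, p⟫ + c)
    rw [inner_add_right]; ring

@[simp] lemma Lmap_apply (e : Euc 2) (a c : ℝ) (x : Euc 2) : Lmap e a c x = a * ⟪e, x⟫ + c := rfl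

lemma bellman_norm_le (Ω₀ Ω₁ : Set (Euc 2)) (e : Euc 2) (a c : ℝ)
    (hb : ∀ y ∈ closure Ω₀, ‖y‖ ≤ a * ⟪e, y⟫ + c) (x : Euc 2) :
    bellman Ω₀ Ω₁ (fun y => ‖y‖) x ≤ ((a * ⟪e, x⟫ + c : ℝ) : EReal) := by
  refine iSup_le fun φ => iSup_le fun hφ => iSup_le fun hx => ?_
  obtain ⟨hInt, hfr, -⟩ := hφ
  have hvol : volume (Set.Icc (0:ℝ) 1) = 1 := by
    rw [Real.volume_Icc]; norm_num
  have hxint : x = ∫ t in Set.Icc (0:ℝ) 1, φ t := by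
    rw [← hx, MeasureTheory.setAverage_eq, measureReal_def, hvol]; simp
  set g : ℝ → ℝ := fun t => a * ⟪e, φ t⟫ + c with hgdef
  have hinner_int : MeasureTheory.IntegrableOn (fun t => (⟪e, φ t⟫ : ℝ)) (Set.Icc (0:ℝ) 1) := by
    have := ContinuousLinearMap.integrable_comp (innerSL ℝ e) hInt
    simpa [IntegrableOn] using this
  have hgint : MeasureTheory.IntegrableOn g (Set.Icc (0:ℝ) 1) := by
    apply MeasureTheory.Integrable.add
    · exact hinner_int.const_mul a
    · exact MeasureTheory.integrableOn_const (by rw [hvol]; exact ENNReal.one_ne_top)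
  have hmem : ∀ t ∈ Set.Icc (0:ℝ) 1, ‖φ t‖ ≤ g t := fun t ht =>
    hb _ (frontier_subset_closure (hfr t ht))
  have hg0 : 0 ≤ᵐ[volume.restrict (Set.Icc (0:ℝ) 1)] g :=
    MeasureTheory.ae_restrict_of_forall_mem measurableSet_Icc
      (fun t ht => le_trans (norm_nonneg _) (hmem t ht))
  have hgval : (∫ t in Set.Icc (0:ℝ) 1, g t) = a * ⟪e, x⟫ + c := by
    rw [hgdef]
    rw [MeasureTheory.integral_add (hinner_int.const_mul a)
      (MeasureTheory.integrableOn_const (by rw [hvol]; exact ENNReal.one_ne_top))]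
    rw [MeasureTheory.integral_const, MeasureTheory.integral_const_mul]
    have h1 : (∫ t in Set.Icc (0:ℝ) 1, (⟪e, φ t⟫ : ℝ)) = ⟪e, x⟫ := by
      rw [hxint]
      have := (innerSL ℝ e).integral_comp_comm hInt
      simpa using this
    rw [h1, measureReal_restrict_apply_univ, measureReal_def, hvol]
    norm_num
  have hg0' : 0 ≤ ∫ t in Set.Icc (0:ℝ) 1, g t := MeasureTheory.integral_nonneg_of_ae hg0
  have hnonneg : 0 ≤ a * ⟪e, x⟫ + c := hgval ▸ hg0'
  have hneg : (∫⁻ t in Set.Icc (0:ℝ) 1, ENNReal.ofReal (-‖φ t‖)) = 0 := by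
    have h : ∀ t : ℝ, ENNReal.ofReal (-‖φ t‖) = 0 := fun t => by
      rw [ENNReal.ofReal_eq_zero]
      simp [norm_nonneg]
    simp [h]
  have hle : (∫⁻ t in Set.Icc (0:ℝ) 1, ENNReal.ofReal ‖φ t‖) ≤
      ENNReal.ofReal (a * ⟪e, x⟫ + c) := by
    rw [← hgval, MeasureTheory.ofReal_integral_eq_lintegral_ofReal hgint hg0]
    apply MeasureTheory.lintegral_mono_ae
    apply MeasureTheory.ae_restrict_of_forall_mem measurableSet_Icc
    intro t ht
    exact ENNReal.ofReal_le_ofReal (hmem t ht)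
  calc avgE (fun t => ‖φ t‖)
      = ((∫⁻ t in Set.Icc (0:ℝ) 1, ENNReal.ofReal ‖φ t‖ : ℝ≥0∞) : EReal) := by
        rw [avgE, hneg]
        simp
    _ ≤ ((ENNReal.ofReal (a * ⟪e, x⟫ + c) : ℝ≥0∞) : EReal) :=
        EReal.coe_ennreal_le_coe_ennreal_iff.2 hle
    _ = ((a * ⟪e, x⟫ + c : ℝ) : EReal) := by
        rw [EReal.coe_ennreal_ofReal, max_eq_left hnonneg]

/-- Under conditions (1) and (3), the Bellman function for the boundary
function `f(x) = |x|` is finite on `Ω = cl Ω₀ \ Ω₁`, bounded on every compact subset of `Ω`,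
and in fact dominated on `Ω` by an affine function `L`. -/
theorem stmt10 (Ω₀ Ω₁ : Set (Euc 2)) (h0ne : Ω₀.Nonempty) (h0open : IsOpen Ω₀)
    (h0conv : Convex ℝ Ω₀) (h0line : ContainsNoLine Ω₀)
    (h1open : IsOpen Ω₁) (h1conv : Convex ℝ Ω₁) (h1cl : closure Ω₁ ⊆ Ω₀)
    (h1 : Cond1 Ω₀ Ω₁) (h3 : Cond3 Ω₀ Ω₁) :
    (∀ x ∈ closure Ω₀ \ Ω₁, bellman Ω₀ Ω₁ (fun y => ‖y‖) x < ⊤) ∧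
    (∀ K : Set (Euc 2), IsCompact K → K ⊆ closure Ω₀ \ Ω₁ →
      ∃ C : ℝ, ∀ x ∈ K, bellman Ω₀ Ω₁ (fun y => ‖y‖) x ≤ (C : EReal)) ∧
    (∃ L : Euc 2 →ᵃ[ℝ] ℝ, ∀ x ∈ closure Ω₀ \ Ω₁,
      bellman Ω₀ Ω₁ (fun y => ‖y‖) x ≤ ((L x : ℝ) : EReal)) := by
  obtain ⟨e, a, c, hb⟩ := exists_affine_norm_bound h0ne h0open h0conv h0line
  have key : ∀ x : Euc 2, bellman Ω₀ Ω₁ (fun y => ‖y‖) x ≤ ((a * ⟪e, x⟫ + c : ℝ) : EReal) :=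
    bellman_norm_le Ω₀ Ω₁ e a c hb
  refine ⟨fun x _ => lt_of_le_of_lt (key x) (EReal.coe_lt_top _), ?_, ?_⟩
  · intro K hK _
    obtain ⟨C₀, hC₀⟩ := hK.exists_bound_of_continuousOn
      (f := fun x : Euc 2 => a * ⟪e, x⟫ + c)
      (((continuous_const.mul (continuous_const.inner continuous_id)).add
        continuous_const).continuousOn)
    refine ⟨C₀, fun x hx => le_trans (key x) ?_⟩
    rw [EReal.coe_le_coe_iff]
    have h := hC₀ x hx
    rw [Real.norm_eq_abs] at h
    exact le_trans (le_abs_self _) h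
  · exact ⟨Lmap e a c, fun x _ => key x⟩
end
end

section
/- Let Ω₀ be a nonempty open convex subset of ℝ² that does not contain any line, let Ω₁ be an open convex subset of ℝ² with cl Ω₁ ⊆ Ω₀, set Ω = cl Ω₀ \ Ω₁, assume Ω satisfies conditions (1) and (3), and let Ω̃ = cl Ω₀ \ Ω̃₁ be an extension of Ω. Let φ ∈ A_Ω be defined on an interval I. Then there exists a partition of I into two intervals I₁ and I₂ with disjoint interiors such that the segment [⟨φ⟩_{I₁}, ⟨φ⟩_{I₂}] is contained in Ω̃ and max(|I₁|/|I₂|, |I₂|/|I₁|) ≤ Δ(⟨φ⟩_I), where Δ(x) = sup{ max(1, |x−y|/|x−z|) : x ∈ [y,z], y ∈ Ω, z ∈ cl Ω̃₁ }. -/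
open Set MeasureTheory
open scoped ENNReal

noncomputable section

/-- The function `Δ(x) = sup { max(1, |x−y|/|x−z|) : x ∈ [y,z], y ∈ Ω, z ∈ cl Ω̃₁ }`. -/
def Delta (Ω Ωt₁ : Set (Euc 2)) (x : Euc 2) : ℝ :=
  sSup {r : ℝ | ∃ y ∈ Ω, ∃ z ∈ closure Ωt₁,
    x ∈ segment ℝ y z ∧ r = max 1 (dist x y / dist x z)}

section Helpers
open Filter
lemma recOfSeq {C : Set (Euc 2)} (hC : IsClosed C) (hconv : Convex ℝ C)
    {z : ℕ → Euc 2} (hz : ∀ n, z n ∈ C) {d : ℕ → ℝ} (hd : Tendsto d atTop atTop)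
    {v : Euc 2} (hv : Tendsto (fun n => (d n)⁻¹ • z n) atTop (nhds v)) :
    ∀ w ∈ C, ∀ s : ℝ, 0 ≤ s → w + s • v ∈ C := by
  intro w hw s hs
  have hev : ∀ᶠ n in atTop, d n ≥ max s 1 := hd.eventually_ge_atTop _
  have hmem : ∀ᶠ n in atTop, w + (s * (d n)⁻¹) • (z n - w) ∈ C := by
    filter_upwards [hev] with n hn
    have hd1 : (1:ℝ) ≤ d n := le_trans (le_max_right _ _) hn
    have hdpos : (0:ℝ) < d n := lt_of_lt_of_le one_pos hd1
    have hμ0 : 0 ≤ s * (d n)⁻¹ := mul_nonneg hs (inv_nonneg.2 hdpos.le)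
    have hμ1 : s * (d n)⁻¹ ≤ 1 := by
      rw [mul_inv_le_iff₀ hdpos, one_mul]
      exact le_trans (le_max_left s 1) hn
    have : (1 - s * (d n)⁻¹) • w + (s * (d n)⁻¹) • z n ∈ C :=
      hconv hw (hz n) (by linarith) hμ0 (by ring)
    convert this using 1
    simp [smul_sub, sub_smul]
    abel
  have hlim : Tendsto (fun n => w + (s * (d n)⁻¹) • (z n - w)) atTop (nhds (w + s • v)) := by
    have h1 : Tendsto (fun n => (s * (d n)⁻¹) • z n) atTop (nhds (s • v)) := by
      have := hv.const_smul s
      simpa [smul_smul] using this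
    have h2 : Tendsto (fun n => (s * (d n)⁻¹) • w) atTop (nhds ((0:ℝ) • w)) := by
      refine Tendsto.smul_const ?_ w
      simpa using tendsto_const_nhds.mul (hd.inv_tendsto_atTop)
    have := (tendsto_const_nhds (x := w)).add (h1.sub h2)
    simpa [smul_sub] using this
  exact hC.mem_of_tendsto hlim hmem

lemma halfCombo {Ω₀ : Set (Euc 2)} (h0open : IsOpen Ω₀) (h0conv : Convex ℝ Ω₀)
    {q y : Euc 2} (hq : q ∈ Ω₀) (hy : y ∈ closure Ω₀) :
    (1/2 : ℝ) • q + (1/2 : ℝ) • y ∈ Ω₀ := by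
  have := h0conv.combo_interior_closure_mem_interior
    (x := q) (y := y) (a := (1/2:ℝ)) (b := (1/2:ℝ))
    (by rwa [h0open.interior_eq]) hy (by norm_num) (by norm_num) (by norm_num)
  rwa [h0open.interior_eq] at this

/-- From an unbounded closed convex set, extract a unit recession direction. -/
lemma exists_recession {C : Set (Euc 2)} (hC : IsClosed C) (hconv : Convex ℝ C)
    (hub : ¬ Bornology.IsBounded C) :
    ∃ u : Euc 2, ‖u‖ = 1 ∧ ∀ w ∈ C, ∀ s : ℝ, 0 ≤ s → w + s • u ∈ C := by
  have hpts : ∀ n : ℕ, ∃ w, w ∈ C ∧ (n:ℝ) + 1 ≤ ‖w‖ := by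
    intro n
    rw [Metric.isBounded_iff_subset_closedBall 0] at hub
    push_neg at hub
    obtain ⟨w, hw, hw2⟩ := not_subset.1 (hub ((n:ℝ) + 1))
    refine ⟨w, hw, ?_⟩
    by_contra hcon
    exact hw2 (by simpa [Metric.mem_closedBall, dist_eq_norm] using (not_le.1 hcon).le)
  choose w hwC hwn using hpts
  have hd : Tendsto (fun n => ‖w n‖) atTop atTop :=
    tendsto_atTop_mono hwn (tendsto_atTop_add_const_right _ 1 tendsto_natCast_atTop_atTop)
  have hne : ∀ n, ‖w n‖ ≠ 0 := fun n => by
    have : (0:ℝ) < (n:ℝ) + 1 := by positivity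
    exact (lt_of_lt_of_le this (hwn n)).ne'
  have hsp : ∀ n, ‖w n‖⁻¹ • w n ∈ Metric.sphere (0 : Euc 2) 1 := by
    intro n
    simp [norm_smul, abs_of_nonneg (inv_nonneg.2 (norm_nonneg _)), inv_mul_cancel₀ (hne n)]
  obtain ⟨u, hu, g, hg, hglim⟩ := (isCompact_sphere (0 : Euc 2) 1).tendsto_subseq hsp
  have hu1 : ‖u‖ = 1 := by simpa using hu
  refine ⟨u, hu1, ?_⟩
  exact recOfSeq hC hconv (fun n => hwC (g n))
    (hd.comp hg.tendsto_atTop) (by exact hglim)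

/-- A recession direction of `closure Ω₀` gives honest rays inside the open set `Ω₀`. -/
lemma openRay {Ω₀ : Set (Euc 2)} (h0open : IsOpen Ω₀) (h0conv : Convex ℝ Ω₀)
    {q x u : Euc 2} (hq : q ∈ Ω₀) (hrec : ∀ s : ℝ, 0 ≤ s → x + s • u ∈ closure Ω₀) :
    ∀ s : ℝ, 0 ≤ s → ((1/2:ℝ) • q + (1/2:ℝ) • x) + s • u ∈ Ω₀ := by
  intro s hs
  have h2 : x + (2*s) • u ∈ closure Ω₀ := hrec _ (by positivity)
  have := halfCombo h0open h0conv hq h2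
  convert this using 1
  rw [smul_add, smul_smul]
  ring_nf
  module
lemma segParam {x y z : Euc 2} (hseg : x ∈ segment ℝ y z) (hxy : x ≠ y) :
    ∃ u : Euc 2, ‖u‖ = 1 ∧ y = x + dist x y • u ∧ z = x - dist x z • u := by
  obtain ⟨α, β, hα, hβ, hαβ, hxyz⟩ := hseg
  have hs : (0:ℝ) < dist x y := dist_pos.2 hxy
  set s := dist x y with hsdef
  refine ⟨s⁻¹ • (y - x), ?_, ?_, ?_⟩
  · rw [norm_smul]
    have : ‖y - x‖ = s := by rw [hsdef, dist_eq_norm, norm_sub_rev]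
    rw [this, Real.norm_eq_abs, abs_of_nonneg (inv_nonneg.2 hs.le), inv_mul_cancel₀ hs.ne']
  · rw [smul_smul, mul_inv_cancel₀ hs.ne', one_smul]; abel
  · have hβ0 : β ≠ 0 := by
      rintro rfl
      apply hxy
      have hα1 : α = 1 := by linarith
      rw [hα1, zero_smul, add_zero, one_smul] at hxyz
      exact hxyz.symm
    have key : β • (z - x) = α • (x - y) := by
      have hα' : α = 1 - β := by linarith
      subst hα'
      rw [← hxyz]
      module
    have hzx : z - x = (α / β) • (x - y) := by
      have := congrArg (fun w => β⁻¹ • w) key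
      simpa [smul_smul, inv_mul_cancel₀ hβ0, div_eq_inv_mul, mul_comm] using this
    have hdist : dist x z = (α / β) * s := by
      have h1 : ‖z - x‖ = dist x z := by rw [dist_eq_norm, norm_sub_rev]
      have h2 : ‖x - y‖ = s := by rw [hsdef, dist_eq_norm]
      have hq : 0 ≤ α / β := div_nonneg hα (hβ.lt_of_ne (Ne.symm hβ0)).le
      rw [← h1, hzx, norm_smul, Real.norm_eq_abs, abs_of_nonneg hq, h2]
    have : z - x = -((dist x z) • (s⁻¹ • (y - x))) := by
      rw [hzx, hdist, smul_smul, mul_assoc, mul_inv_cancel₀ hs.ne', mul_one]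
      module
    calc z = x + (z - x) := by abel
      _ = x - dist x z • s⁻¹ • (y - x) := by rw [this]; abel


lemma deltaBdd (Ω₀ Ω₁ Ωt₁ : Set (Euc 2)) (h0ne : Ω₀.Nonempty) (h0open : IsOpen Ω₀)
    (h0conv : Convex ℝ Ω₀) (h0line : ContainsNoLine Ω₀)
    (h1cl : closure Ω₁ ⊆ Ω₀) (htconv : Convex ℝ Ωt₁) (htcl : closure Ωt₁ ⊆ Ω₁)
    (ht3 : Cond3 Ω₀ Ωt₁) (x : Euc 2) (hx0 : x ∈ closure Ω₀) (hx1 : x ∉ Ω₁)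
    (htne : (closure Ωt₁).Nonempty) :
    BddAbove {r : ℝ | ∃ y ∈ closure Ω₀ \ Ω₁, ∃ z ∈ closure Ωt₁,
      x ∈ segment ℝ y z ∧ r = max 1 (dist x y / dist x z)} := by
  obtain ⟨q, hq⟩ := h0ne
  have hxt : x ∉ closure Ωt₁ := fun h => hx1 (htcl h)
  set δ := Metric.infDist x (closure Ωt₁) with hδdef
  have hδ : 0 < δ :=
    (isClosed_closure.notMem_iff_infDist_pos htne).1 hxt
  by_contra hbdd
  rw [not_bddAbove_iff] at hbdd
  -- extract sequences
  have hseq : ∀ n : ℕ, ∃ y z : Euc 2, y ∈ closure Ω₀ ∧ y ∉ Ω₁ ∧ z ∈ closure Ωt₁ ∧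
      x ∈ segment ℝ y z ∧ ((n:ℝ) + 1) < dist x y / dist x z := by
    intro n
    obtain ⟨r, hrS, hr⟩ := hbdd ((n:ℝ) + 1)
    obtain ⟨y, hy, z, hz, hseg, hreq⟩ := hrS
    refine ⟨y, z, hy.1, hy.2, hz, hseg, ?_⟩
    have h1 : (1:ℝ) ≤ (n:ℝ) + 1 := by linarith [Nat.cast_nonneg (α := ℝ) n]
    rcases max_cases (1:ℝ) (dist x y / dist x z) with ⟨hm, _⟩ | ⟨hm, _⟩ <;>
      rw [hreq, hm] at hr
    · linarith
    · exact hr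
  choose y z hyC hy1 hzC hseg hrat using hseq
  set t : ℕ → ℝ := fun n => dist x (z n) with ht
  set s : ℕ → ℝ := fun n => dist x (y n) with hs
  have htδ : ∀ n : ℕ, δ ≤ t n := fun n => Metric.infDist_le_dist_of_mem (hzC n)
  have htpos : ∀ n : ℕ, 0 < t n := fun n => lt_of_lt_of_le hδ (htδ n)
  have hsn : ∀ n : ℕ, ((n:ℝ) + 1) * δ < s n := by
    intro n
    have h1 : ((n:ℝ)+1) * t n < s n := by
      have := hrat n
      rw [lt_div_iff₀ (htpos n)] at this
      exact this
    calc ((n:ℝ)+1) * δ ≤ ((n:ℝ)+1) * t n := by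
          apply mul_le_mul_of_nonneg_left (htδ n); positivity
      _ < s n := h1
  have hspos : ∀ n : ℕ, 0 < s n := fun n =>
    lt_of_le_of_lt (by positivity) (hsn n)
  have hxy : ∀ n : ℕ, x ≠ y n := fun n h => by
    have := hspos n; rw [hs] at this; simp [← h] at this
  -- unit directions
  have hu : ∀ n : ℕ, ∃ u : Euc 2, ‖u‖ = 1 ∧ y n = x + s n • u ∧ z n = x - t n • u := by
    intro n; exact segParam (hseg n) (hxy n)
  choose u hu1 huy huz using hu
  -- compactness extractions
  have huS : ∀ n : ℕ, u n ∈ Metric.sphere (0 : Euc 2) 1 := by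
    intro n; simp [Metric.mem_sphere, dist_eq_norm, hu1 n]
  obtain ⟨uLim, huI, g₁, hg₁, hg₁lim⟩ := (isCompact_sphere (0 : Euc 2) 1).tendsto_subseq huS
  have huLim1 : ‖uLim‖ = 1 := by simpa using huI
  have hu0ne : uLim ≠ 0 := by intro h; rw [h] at huLim1; simp at huLim1
  have hτS : ∀ n : ℕ, (t (g₁ n))⁻¹ ∈ Icc (0:ℝ) δ⁻¹ := by
    intro n
    constructor
    · exact inv_nonneg.2 (htpos _).le
    · exact inv_anti₀ hδ (htδ _)
  obtain ⟨tauLim, hτI, g₂, hg₂, hg₂lim⟩ := (isCompact_Icc (a := (0:ℝ)) (b := δ⁻¹)).tendsto_subseq hτS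
  set h : ℕ → ℕ := fun n => g₁ (g₂ n) with hh
  have hhmono : StrictMono h := hg₁.comp hg₂
  have hulim : Tendsto (fun n => u (h n)) atTop (nhds uLim) := hg₁lim.comp hg₂.tendsto_atTop
  -- s ∘ h → ∞
  have hshlim : Tendsto (fun n => s (h n)) atTop atTop := by
    have hbig : Tendsto (fun n : ℕ => ((n:ℝ) + 1) * δ) atTop atTop :=
      Tendsto.atTop_mul_const hδ (tendsto_atTop_add_const_right _ 1 tendsto_natCast_atTop_atTop)
    refine tendsto_atTop_mono (fun n => ?_) hbig
    have hn : (n:ℝ) ≤ (h n : ℝ) := by exact_mod_cast (hhmono.id_le n)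
    have h2 := (hsn (h n)).le
    nlinarith
  -- recession of closure Ω₀ in direction uLim
  have hylim : Tendsto (fun n => (s (h n))⁻¹ • y (h n)) atTop (nhds uLim) := by
    have heq : ∀ n, (s (h n))⁻¹ • y (h n) = (s (h n))⁻¹ • x + u (h n) := by
      intro n
      rw [huy (h n), smul_add, smul_smul, inv_mul_cancel₀ (hspos (h n)).ne', one_smul]
    simp_rw [heq]
    have h1 : Tendsto (fun n => (s (h n))⁻¹ • x) atTop (nhds ((0:ℝ) • x)) :=
      Tendsto.smul_const (hshlim.inv_tendsto_atTop) x
    simpa using h1.add hulim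
  have recΩ₀ : ∀ w ∈ closure Ω₀, ∀ r : ℝ, 0 ≤ r → w + r • uLim ∈ closure Ω₀ :=
    recOfSeq isClosed_closure h0conv.closure (fun n => hyC (h n)) hshlim hylim
  -- two cases on tauLim
  rcases eq_or_lt_of_le hτI.1 with hτ0 | hτpos
  · -- tauLim = 0 : t ∘ h → ∞, recession of closure Ωt₁ in direction -uLim, line in Ω₀
    have hthlim : Tendsto (fun n => t (h n)) atTop atTop := by
      have h1 : Tendsto (fun n => (t (h n))⁻¹) atTop (nhdsWithin 0 (Ioi 0)) := by
        apply tendsto_nhdsWithin_of_tendsto_nhds_of_eventually_within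
        · rw [← hτ0] at hg₂lim; exact hg₂lim
        · exact Eventually.of_forall (fun n => inv_pos.2 (htpos _))
      exact (tendsto_inv_nhdsGT_zero.comp h1).congr fun n => inv_inv _
    have hzlim : Tendsto (fun n => (t (h n))⁻¹ • z (h n)) atTop (nhds (-uLim)) := by
      have heq : ∀ n, (t (h n))⁻¹ • z (h n) = (t (h n))⁻¹ • x - u (h n) := by
        intro n
        rw [huz (h n), smul_sub, smul_smul, inv_mul_cancel₀ (htpos (h n)).ne', one_smul]
      simp_rw [heq]
      have h1 : Tendsto (fun n => (t (h n))⁻¹ • x) atTop (nhds ((0:ℝ) • x)) :=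
        Tendsto.smul_const (hthlim.inv_tendsto_atTop) x
      have := h1.sub hulim
      simpa using this
    have recT : ∀ w ∈ closure Ωt₁, ∀ r : ℝ, 0 ≤ r → w + r • (-uLim) ∈ closure Ωt₁ :=
      recOfSeq isClosed_closure htconv.closure (fun n => hzC (h n)) hthlim hzlim
    -- build a line inside Ω₀
    set w₀ := z (h 0) with hw₀
    have hw₀Ω₀ : w₀ ∈ Ω₀ := h1cl (subset_closure (htcl (hzC (h 0))))
    apply h0line
    refine ⟨(1/2:ℝ) • q + (1/2:ℝ) • w₀, uLim, hu0ne, ?_⟩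
    intro r
    rcases le_or_gt 0 r with hr | hr
    · -- r ≥ 0 : use recession of closure Ω₀
      have h2 : q + (2*r) • uLim ∈ closure Ω₀ := recΩ₀ q (subset_closure hq) _ (by positivity)
      have := halfCombo h0open h0conv hw₀Ω₀ h2
      convert this using 1
      module
    · -- r < 0 : use recession of closure Ωt₁ in direction -uLim
      have h2 : w₀ + (-(2*r)) • (-uLim) ∈ closure Ωt₁ :=
        recT w₀ (hzC (h 0)) _ (by linarith)
      have h3 : w₀ + (-(2*r)) • (-uLim) ∈ closure Ω₀ :=
        subset_closure (h1cl (subset_closure (htcl h2)))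
      have := halfCombo h0open h0conv hq h3
      convert this using 1
      module
  · -- tauLim > 0 : z ∘ h converges, x ∈ closure Ωt₁, contradiction
    have hτ0 : tauLim ≠ 0 := hτpos.ne'
    have hthlim : Tendsto (fun n => t (h n)) atTop (nhds tauLim⁻¹) := by
      have := hg₂lim.inv₀ hτ0
      simpa using this
    have hzlim : Tendsto (fun n => z (h n)) atTop (nhds (x - tauLim⁻¹ • uLim)) := by
      have heq : ∀ n, z (h n) = x - t (h n) • u (h n) := fun n => huz (h n)
      simp_rw [heq]
      exact tendsto_const_nhds.sub (hthlim.smul hulim)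
    have hzLim : x - tauLim⁻¹ • uLim ∈ closure Ωt₁ :=
      isClosed_closure.mem_of_tendsto hzlim (Eventually.of_forall (fun n => hzC (h n)))
    -- a ray inside Ω₀ in direction uLim
    have hray : ∀ r : ℝ, 0 ≤ r → ((1/2:ℝ) • q + (1/2:ℝ) • x) + r • uLim ∈ Ω₀ :=
      openRay h0open h0conv hq (fun r hr => recΩ₀ x hx0 r hr)
    obtain ⟨p, hp⟩ := ht3.2 _ uLim hu0ne hray
    -- recession of closure Ωt₁ in direction uLim
    have hmem : ∀ n : ℕ, p + ((n:ℝ)+1) • uLim ∈ closure Ωt₁ := by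
      intro n; exact subset_closure (hp _ (by positivity))
    have hdlim : Tendsto (fun n : ℕ => (n:ℝ)+1) atTop atTop :=
      tendsto_atTop_add_const_right _ 1 tendsto_natCast_atTop_atTop
    have hvlim : Tendsto (fun n : ℕ => ((n:ℝ)+1)⁻¹ • (p + ((n:ℝ)+1) • uLim)) atTop
        (nhds uLim) := by
      have heq : ∀ n : ℕ, ((n:ℝ)+1)⁻¹ • (p + ((n:ℝ)+1) • uLim)
          = ((n:ℝ)+1)⁻¹ • p + uLim := by
        intro n
        have hne : ((n:ℝ)+1) ≠ 0 := by positivity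
        rw [smul_add, smul_smul, inv_mul_cancel₀ hne, one_smul]
      simp_rw [heq]
      have h1 : Tendsto (fun n : ℕ => ((n:ℝ)+1)⁻¹ • p) atTop (nhds ((0:ℝ) • p)) :=
        Tendsto.smul_const hdlim.inv_tendsto_atTop p
      simpa using h1.add tendsto_const_nhds
    have recT : ∀ w ∈ closure Ωt₁, ∀ r : ℝ, 0 ≤ r → w + r • uLim ∈ closure Ωt₁ :=
      recOfSeq isClosed_closure htconv.closure hmem hdlim hvlim
    have hxmem : x ∈ closure Ωt₁ := by
      have := recT _ hzLim tauLim⁻¹ (by positivity)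
      simpa using this
    exact hxt hxmem

/-- If points of both `[A,x]` and `[x,B]` lie in a convex set `W` with `x ∉ W`,
where `x` is a proper convex combination of `A` and `B`, contradiction. -/
lemma segJoin {W : Set (Euc 2)} (hconv : Convex ℝ W) {A B x p p' : Euc 2} {lam : ℝ}
    (hlam : 0 < lam) (hlam1 : lam < 1) (hx : x = lam • A + (1 - lam) • B)
    (hp : p ∈ segment ℝ A x) (hp' : p' ∈ segment ℝ x B)
    (hpW : p ∈ W) (hp'W : p' ∈ W) (hxW : x ∉ W) : False := by
  obtain ⟨α, α', hα, hα', hαs, hpe⟩ := hp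
  obtain ⟨β', β, hβ', hβ, hβs, hp'e⟩ := hp'
  -- p = x + α•(A - x),  p' = x + β•(B - x)
  have hpx : p - x = α • (A - x) := by
    have : α' = 1 - α := by linarith
    rw [← hpe, this]; module
  have hp'x : p' - x = β • (B - x) := by
    have : β' = 1 - β := by linarith
    rw [← hp'e, this]; module
  have hα0 : 0 < α := by
    rcases hα.lt_or_eq with h | h
    · exact h
    · exfalso; apply hxW
      have : p = x := by
        have := hpx; rw [← h, zero_smul, sub_eq_zero] at this; exact this
      rwa [this] at hpW
  have hβ0 : 0 < β := by
    rcases hβ.lt_or_eq with h | h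
    · exact h
    · exfalso; apply hxW
      have : p' = x := by
        have := hp'x; rw [← h, zero_smul, sub_eq_zero] at this; exact this
      rwa [this] at hp'W
  have hAx : A - x = (1 - lam) • (A - B) := by rw [hx]; module
  have hBx : B - x = (-lam) • (A - B) := by rw [hx]; module
  set a' : ℝ := α * (1 - lam) with ha'
  set b' : ℝ := β * lam with hb'
  have ha'0 : 0 < a' := mul_pos hα0 (by linarith)
  have hb'0 : 0 < b' := mul_pos hβ0 hlam
  have hpd : p - x = a' • (A - B) := by rw [hpx, hAx, smul_smul]
  have hp'd : p' - x = (-b') • (A - B) := by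
    rw [hp'x, hBx, smul_smul, hb']; ring_nf
  have hxseg : x ∈ segment ℝ p p' := by
    have hne : a' + b' ≠ 0 := by positivity
    refine ⟨b' / (a' + b'), a' / (a' + b'), by positivity, by positivity,
      by field_simp; ring, ?_⟩
    have hp2 : p = x + a' • (A - B) := by
      calc p = x + (p - x) := by abel
        _ = x + a' • (A - B) := by rw [hpd]
    have hp'2 : p' = x - b' • (A - B) := by
      calc p' = x + (p' - x) := by abel
        _ = x - b' • (A - B) := by rw [hp'd]; module
    rw [hp2, hp'2]
    match_scalars <;> field_simp <;> ring
  exact hxW (hconv.segment_subset hpW hp'W hxseg)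

/-- A point of `[A,B]` lies on `[A,x]` or `[x,B]` when `x` is a convex combination. -/
lemma segSplit {A B x p : Euc 2} {lam : ℝ} (hlam : 0 < lam) (hlam1 : lam < 1)
    (hx : x = lam • A + (1 - lam) • B) (hp : p ∈ segment ℝ A B) :
    p ∈ segment ℝ A x ∨ p ∈ segment ℝ x B := by
  obtain ⟨a0, θ, ha0, hθ, hsum, hpe⟩ := hp
  have ha0' : a0 = 1 - θ := by linarith
  subst ha0'
  have hθ1 : θ ≤ 1 := by linarith
  rcases le_or_gt θ (1 - lam) with hcase | hcase
  · left
    set κ : ℝ := θ / (1 - lam) with hκ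
    have hl1 : (0:ℝ) < 1 - lam := by linarith
    have hκ0 : 0 ≤ κ := div_nonneg hθ hl1.le
    have hκ1 : κ ≤ 1 := by rw [div_le_one hl1]; linarith
    refine ⟨1 - κ, κ, by linarith, hκ0, by ring, ?_⟩
    have hmul : κ * (1 - lam) = θ := div_mul_cancel₀ θ hl1.ne'
    calc (1 - κ) • A + κ • x = A + κ • (x - A) := by module
      _ = A + κ • ((1 - lam) • (B - A)) := by rw [hx]; module
      _ = A + (κ * (1 - lam)) • (B - A) := by rw [smul_smul]
      _ = A + θ • (B - A) := by rw [hmul]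
      _ = (1 - θ) • A + θ • B := by module
      _ = p := hpe
  · right
    set κ : ℝ := (θ - (1 - lam)) / lam with hκ
    have hκ0 : 0 ≤ κ := div_nonneg (by linarith) hlam.le
    have hκ1 : κ ≤ 1 := by rw [div_le_one hlam]; linarith
    refine ⟨1 - κ, κ, by linarith, hκ0, by ring, ?_⟩
    have hmul : κ * lam = θ - (1 - lam) := div_mul_cancel₀ _ hlam.ne'
    calc (1 - κ) • x + κ • B = x + κ • (B - x) := by module
      _ = x + κ • (lam • (B - A)) := by rw [hx]; module
      _ = x + (κ * lam) • (B - A) := by rw [smul_smul]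
      _ = (lam • A + (1 - lam) • B) + (θ - (1 - lam)) • (B - A) := by rw [hmul, hx]
      _ = (1 - θ) • A + θ • B := by module
      _ = p := hpe

/-- Witness for the Delta set coming from a touching point on the `A`-side. -/
lemma deltaWitness {Ω₀ Ω₁ Ωt₁ : Set (Euc 2)} (htcl : closure Ωt₁ ⊆ Ω₁)
    {x A B z : Euc 2} {lam : ℝ} (hlam : 0 < lam) (hlam1 : lam < 1)
    (hx : x = lam • A + (1 - lam) • B) (hz : z ∈ closure Ωt₁)
    (hzseg : z ∈ segment ℝ A x) (hB : B ∈ closure Ω₀ \ Ω₁) (hx1 : x ∉ Ω₁) :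
    lam / (1 - lam) ≤ max 1 (dist x B / dist x z) ∧
    (max 1 (dist x B / dist x z)) ∈ {r : ℝ | ∃ y ∈ closure Ω₀ \ Ω₁, ∃ z' ∈ closure Ωt₁,
      x ∈ segment ℝ y z' ∧ r = max 1 (dist x y / dist x z')} := by
  obtain ⟨α, α', hα, hα', hαs, hze⟩ := hzseg
  have hzx : z - x = α • (A - x) := by
    have : α' = 1 - α := by linarith
    rw [← hze, this]; module
  have hAx : A - x = (1 - lam) • (A - B) := by rw [hx]; module
  have hBx : B - x = (-lam) • (A - B) := by rw [hx]; module
  set κ : ℝ := α * (1 - lam) with hκ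
  have hκ0 : 0 ≤ κ := mul_nonneg hα (by linarith)
  have hzd : z - x = κ • (A - B) := by rw [hzx, hAx, smul_smul]
  have hzne : z ≠ x := by
    intro h; rw [h] at hz; exact hx1 (htcl hz)
  have hdistz : dist x z = κ * ‖A - B‖ := by
    rw [dist_eq_norm, norm_sub_rev, hzd, norm_smul, Real.norm_eq_abs, abs_of_nonneg hκ0]
  have hdistzpos : 0 < dist x z := dist_pos.2 (Ne.symm hzne)
  have hdistB : dist x B = lam * ‖A - B‖ := by
    have : x - B = lam • (A - B) := by rw [hx]; module
    rw [dist_eq_norm, this, norm_smul, Real.norm_eq_abs, abs_of_nonneg hlam.le]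
  have hdpos : 0 < ‖A - B‖ := by
    by_contra hcon
    push_neg at hcon
    have : ‖A - B‖ = 0 := le_antisymm hcon (norm_nonneg _)
    rw [hdistz, this, mul_zero] at hdistzpos
    exact lt_irrefl _ hdistzpos
  have hκpos : 0 < κ := by
    by_contra hcon
    push_neg at hcon
    have : κ = 0 := le_antisymm hcon hκ0
    rw [hdistz, this, zero_mul] at hdistzpos
    exact lt_irrefl _ hdistzpos
  have hκle : κ ≤ 1 - lam := by
    have hα1 : α ≤ 1 := by linarith
    calc κ = α * (1 - lam) := rfl
      _ ≤ 1 * (1 - lam) := by apply mul_le_mul_of_nonneg_right hα1; linarith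
      _ = 1 - lam := one_mul _
  constructor
  · refine le_max_of_le_right ?_
    rw [div_le_div_iff₀ (by linarith) hdistzpos, hdistz, hdistB]
    have hkey : lam * (κ * ‖A - B‖) ≤ lam * ((1 - lam) * ‖A - B‖) :=
      mul_le_mul_of_nonneg_left (mul_le_mul_of_nonneg_right hκle (norm_nonneg _)) hlam.le
    calc lam * (κ * ‖A - B‖) ≤ lam * ((1 - lam) * ‖A - B‖) := hkey
      _ = lam * ‖A - B‖ * (1 - lam) := by ring
  · refine ⟨B, hB, z, hz, ?_, rfl⟩
    -- x ∈ segment B z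
    have hne : lam + κ ≠ 0 := by positivity
    refine ⟨κ / (lam + κ), lam / (lam + κ), by positivity, by positivity,
      by field_simp; ring, ?_⟩
    obtain ⟨d, hd⟩ : ∃ d, d = A - B := ⟨A - B, rfl⟩
    have hBe : B = x + (-lam) • d := by rw [hd, hx]; module
    have hze3 : z = x + κ • d := by
      rw [hd]
      calc z = x + (z - x) := by abel
        _ = x + κ • (A - B) := by rw [hzd]
    rw [hze3, hBe]
    match_scalars <;> field_simp <;> ring

/-- Limit point of touching segments. -/
lemma touchLimit {Ωt₁ : Set (Euc 2)} {g : ℝ → Euc 2} {X : Euc 2} {cs : ℕ → ℝ} {cst : ℝ}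
    (hg : ContinuousAt g cst) (hcs : Tendsto cs atTop (nhds cst))
    (hmem : ∀ n, ∃ p ∈ Ωt₁, p ∈ segment ℝ (g (cs n)) X) :
    ∃ z ∈ closure Ωt₁, z ∈ segment ℝ (g cst) X := by
  choose p hpt hpseg using hmem
  choose θ θ' h0 h0' hsum hpe using hpseg
  have hθI : ∀ n, θ n ∈ Icc (0:ℝ) 1 := fun n => ⟨h0 n, by linarith [h0' n, hsum n]⟩
  obtain ⟨θL, hθL, gg, hgg, hglim⟩ := isCompact_Icc.tendsto_subseq hθI
  have hA : Tendsto (fun n => g (cs (gg n))) atTop (nhds (g cst)) :=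
    (hg.tendsto.comp hcs).comp hgg.tendsto_atTop
  have hθ'lim : Tendsto (fun n => θ' (gg n)) atTop (nhds (1 - θL)) := by
    have he : ∀ n, θ' (gg n) = 1 - θ (gg n) := fun n => by linarith [hsum (gg n)]
    simp_rw [he]
    exact tendsto_const_nhds.sub hglim
  have hplim : Tendsto (fun n => p (gg n)) atTop (nhds (θL • g cst + (1-θL) • X)) := by
    have he : ∀ n, p (gg n) = θ (gg n) • g (cs (gg n)) + θ' (gg n) • X :=
      fun n => (hpe (gg n)).symm
    simp_rw [he]
    exact (hglim.smul hA).add (hθ'lim.smul_const X)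
  refine ⟨θL • g cst + (1-θL) • X, ?_, θL, 1-θL, hθL.1, by linarith [hθL.2], by ring, rfl⟩
  exact isClosed_closure.mem_of_tendsto hplim
    (Eventually.of_forall (fun n => subset_closure (hpt (gg n))))

end Helpers
open Filter

/-- **Splitting lemma.** Let `Ω = cl Ω₀ \ Ω₁` satisfy conditions (1), (3),
let `Ω̃ = cl Ω₀ \ Ω̃₁` be an extension of `Ω`, and let `φ ∈ A_Ω` on `I = [a,b]`. Then `I`
splits into `I₁ = [a,c]` and `I₂ = [c,b]` such that `[⟨φ⟩_{I₁}, ⟨φ⟩_{I₂}] ⊆ Ω̃` and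
`max(|I₁|/|I₂|, |I₂|/|I₁|) ≤ Δ(⟨φ⟩_I)`. -/
theorem stmt12 (Ω₀ Ω₁ Ωt₁ : Set (Euc 2)) (h0ne : Ω₀.Nonempty) (h0open : IsOpen Ω₀)
    (h0conv : Convex ℝ Ω₀) (h0line : ContainsNoLine Ω₀)
    (h1open : IsOpen Ω₁) (h1conv : Convex ℝ Ω₁) (h1cl : closure Ω₁ ⊆ Ω₀)
    (h1 : Cond1 Ω₀ Ω₁) (h3 : Cond3 Ω₀ Ω₁)
    (hext : IsExtension Ω₀ Ω₁ Ωt₁)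
    (a b : ℝ) (hab : a < b) (φ : ℝ → Euc 2) (hφ : classA Ω₀ Ω₁ a b φ) :
    ∃ c : ℝ, a < c ∧ c < b ∧
      segment ℝ (⨍ t in Set.Icc a c, φ t ∂volume) (⨍ t in Set.Icc c b, φ t ∂volume) ⊆
        closure Ω₀ \ Ωt₁ ∧
      max ((c - a) / (b - c)) ((b - c) / (c - a)) ≤
        Delta (closure Ω₀ \ Ω₁) Ωt₁ (⨍ t in Set.Icc a b, φ t ∂volume) := by
  obtain ⟨htopen, htconv, htcl, ht1, ht3⟩ := hext
  obtain ⟨hφInt, hφFr, hφAvg⟩ := hφ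
  have hba : (0:ℝ) < b - a := by linarith
  -- The set `Ωt₁` is nonempty (via a recession direction of the unbounded `Ω₀`).
  obtain ⟨q0, hq0⟩ := h0ne
  have hclub : ¬ Bornology.IsBounded (closure Ω₀) := by
    intro hb; exact ht3.1 (hb.subset subset_closure)
  obtain ⟨u0, hu01, hu0rec⟩ := exists_recession isClosed_closure h0conv.closure hclub
  have hu0ne : u0 ≠ 0 := by intro h; rw [h] at hu01; simp at hu01
  have hray0 : ∀ s : ℝ, 0 ≤ s → ((1/2:ℝ) • q0 + (1/2:ℝ) • q0) + s • u0 ∈ Ω₀ :=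
    openRay h0open h0conv hq0 (fun s hs => hu0rec q0 (subset_closure hq0) s hs)
  obtain ⟨p0, hp0⟩ := ht3.2 _ u0 hu0ne hray0
  have htne : (closure Ωt₁).Nonempty := ⟨p0, subset_closure (by simpa using hp0 0 le_rfl)⟩
  -- Integral bookkeeping
  set F : ℝ → Euc 2 := fun c => ∫ t in Set.Icc a c, φ t ∂volume with hFdef
  have hInt : ∀ u v : ℝ, a ≤ u → v ≤ b → IntegrableOn φ (Set.Icc u v) volume :=
    fun u v hu hv => hφInt.mono (Icc_subset_Icc hu hv) le_rfl
  have hII : ∀ u v : ℝ, a ≤ u → u ≤ v → v ≤ b → IntervalIntegrable φ volume u v := by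
    intro u v hu huv hv
    rw [intervalIntegrable_iff_integrableOn_Ioc_of_le huv]
    exact (hInt u v hu hv).mono Ioc_subset_Icc_self le_rfl
  have hFcont : ContinuousOn F (Set.Icc a b) :=
    intervalIntegral.continuousOn_primitive_Icc hφInt
  have hIccInterval : ∀ u v : ℝ, u ≤ v →
      (∫ t in Set.Icc u v, φ t ∂volume) = ∫ t in u..v, φ t ∂volume := by
    intro u v huv
    rw [intervalIntegral.integral_of_le huv, integral_Icc_eq_integral_Ioc]
  have hsplitIcc : ∀ c : ℝ, a ≤ c → c ≤ b →
      (∫ t in Set.Icc c b, φ t ∂volume) = F b - F c := by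
    intro c h1' h2'
    have hadd := intervalIntegral.integral_add_adjacent_intervals
      (hII a c le_rfl h1' h2') (hII c b h1' h2' le_rfl)
    have e1 : F c = ∫ t in a..c, φ t ∂volume := hIccInterval a c h1'
    have e2 : F b = ∫ t in a..b, φ t ∂volume := hIccInterval a b hab.le
    rw [hIccInterval c b h2', e1, e2, ← hadd]
    abel
  set A : ℝ → Euc 2 := fun c => (c - a)⁻¹ • F c with hAdef
  set B : ℝ → Euc 2 := fun c => (b - c)⁻¹ • (F b - F c) with hBdef
  have hAeq : ∀ c : ℝ, a < c → c ≤ b → (⨍ t in Set.Icc a c, φ t ∂volume) = A c := by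
    intro c h1' h2'
    rw [setAverage_eq, Real.volume_real_Icc_of_le (by linarith)]
  have hBeq : ∀ c : ℝ, a ≤ c → c < b → (⨍ t in Set.Icc c b, φ t ∂volume) = B c := by
    intro c h1' h2'
    rw [setAverage_eq, Real.volume_real_Icc_of_le (by linarith),
      hsplitIcc c h1' h2'.le]
  set X : Euc 2 := ⨍ t in Set.Icc a b, φ t ∂volume with hXdef
  have hXeq : X = (b - a)⁻¹ • F b := by
    rw [hXdef, setAverage_eq, Real.volume_real_Icc_of_le (by linarith)]
  -- membership of averages
  have hmemcl : ∀ c e : ℝ, a ≤ c → c < e → e ≤ b →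
      (⨍ t in Set.Icc c e, φ t ∂volume) ∈ closure Ω₀ := by
    intro c e h1' h2' h3'
    apply Convex.set_average_mem h0conv.closure isClosed_closure
    · rw [Real.volume_Icc]
      simp only [ne_eq, ENNReal.ofReal_eq_zero, not_le]
      linarith
    · rw [Real.volume_Icc]; exact ENNReal.ofReal_ne_top
    · refine ae_restrict_of_forall_mem measurableSet_Icc (fun t ht => ?_)
      have : φ t ∈ frontier Ω₀ := hφFr t ⟨by linarith [ht.1], by linarith [ht.2]⟩
      exact frontier_subset_closure this
    · exact hInt c e h1' (by linarith)
  have hX0 : X ∈ closure Ω₀ := hmemcl a b le_rfl hab le_rfl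
  have hX1 : X ∉ Ω₁ := hφAvg a b le_rfl hab le_rfl
  have hXt1 : X ∉ Ωt₁ := fun h => hX1 (htcl (subset_closure h))
  have hXtc : X ∉ closure Ωt₁ := fun h => hX1 (htcl h)
  have hAmem : ∀ c : ℝ, c ∈ Ioo a b → A c ∈ closure Ω₀ \ Ω₁ := by
    intro c hc
    constructor
    · rw [← hAeq c hc.1 hc.2.le]; exact hmemcl a c le_rfl hc.1 hc.2.le
    · rw [← hAeq c hc.1 hc.2.le]; exact hφAvg a c le_rfl hc.1 hc.2.le
  have hBmem : ∀ c : ℝ, c ∈ Ioo a b → B c ∈ closure Ω₀ \ Ω₁ := by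
    intro c hc
    constructor
    · rw [← hBeq c hc.1.le hc.2]; exact hmemcl c b hc.1.le hc.2 le_rfl
    · rw [← hBeq c hc.1.le hc.2]; exact hφAvg c b hc.1.le hc.2 le_rfl
  -- the convex combination identity
  have hcombo : ∀ c : ℝ, c ∈ Ioo a b →
      X = ((c - a)/(b - a)) • A c + (1 - (c - a)/(b - a)) • B c := by
    intro c hc
    have hca : c - a ≠ 0 := by have := hc.1; intro h; apply this.ne'; linarith
    have hbc : b - c ≠ 0 := by have := hc.2; intro h; apply this.ne; linarith
    have e0 : 1 - (c - a)/(b - a) = (b - c)/(b - a) := by field_simp; all_goals ring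
    rw [hXeq, e0, hAdef, hBdef]
    simp only
    rw [smul_smul, smul_smul]
    have e1 : (c - a)/(b - a) * (c - a)⁻¹ = (b - a)⁻¹ := by
      field_simp
      all_goals ring
    have e2 : (b - c)/(b - a) * (b - c)⁻¹ = (b - a)⁻¹ := by
      field_simp
      all_goals ring
    rw [e1, e2, ← smul_add]
    congr 1
    abel
  -- continuity
  have hAcont : ContinuousOn A (Ioc a b) := by
    refine ContinuousOn.smul (f := fun c : ℝ => (c - a)⁻¹) (g := F) ?_ ?_
    · exact ((continuousOn_id.sub continuousOn_const).inv₀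
        (fun c hc => sub_ne_zero.2 (ne_of_gt hc.1)))
    · exact hFcont.mono Ioc_subset_Icc_self
  have hBcont : ContinuousOn B (Ico a b) := by
    refine ContinuousOn.smul (f := fun c : ℝ => (b - c)⁻¹) (g := fun c => F b - F c) ?_ ?_
    · exact ((continuousOn_const.sub continuousOn_id).inv₀
        (fun c hc => sub_ne_zero.2 (ne_of_gt hc.2)))
    · exact continuousOn_const.sub (hFcont.mono Ico_subset_Icc_self)
  have hAct : ∀ c ∈ Ioo a b, ContinuousAt A c := fun c hc =>
    (hAcont.mono Ioo_subset_Ioc_self).continuousAt (isOpen_Ioo.mem_nhds hc)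
  have hBct : ∀ c ∈ Ioo a b, ContinuousAt B c := fun c hc =>
    (hBcont.mono Ioo_subset_Ico_self).continuousAt (isOpen_Ioo.mem_nhds hc)
  -- distance to the obstacle
  set δ := Metric.infDist X (closure Ωt₁) with hδdef
  have hδ : 0 < δ := (isClosed_closure.notMem_iff_infDist_pos htne).1 hXtc
  -- the two open sets
  set U : Set ℝ := {c | c ∈ Ioo a b ∧ ∃ p ∈ Ωt₁, p ∈ segment ℝ (A c) X} with hUdef
  set V : Set ℝ := {c | c ∈ Ioo a b ∧ ∃ p ∈ Ωt₁, p ∈ segment ℝ X (B c)} with hVdef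
  have hUopen : IsOpen U := by
    rw [isOpen_iff_mem_nhds]
    rintro c ⟨hc, p, hpt, θ, θ', h0', h0'', hsum, hpe⟩
    have hG : ContinuousAt (fun c' => θ • A c' + θ' • X) c :=
      ((hAct c hc).const_smul θ).add continuousAt_const
    have hev1 : ∀ᶠ c' in nhds c, θ • A c' + θ' • X ∈ Ωt₁ := by
      have : (fun c' => θ • A c' + θ' • X) ⁻¹' Ωt₁ ∈ nhds c := by
        apply hG
        show Ωt₁ ∈ nhds (θ • A c + θ' • X)
        rw [hpe]
        exact htopen.mem_nhds hpt
      exact this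
    have hev2 : ∀ᶠ c' in nhds c, c' ∈ Ioo a b := isOpen_Ioo.mem_nhds hc
    filter_upwards [hev1, hev2] with c' h1' h2'
    exact ⟨h2', θ • A c' + θ' • X, h1', θ, θ', h0', h0'', hsum, rfl⟩
  have hVopen : IsOpen V := by
    rw [isOpen_iff_mem_nhds]
    rintro c ⟨hc, p, hpt, θ, θ', h0', h0'', hsum, hpe⟩
    have hG : ContinuousAt (fun c' => θ • X + θ' • B c') c :=
      continuousAt_const.add ((hBct c hc).const_smul θ')
    have hev1 : ∀ᶠ c' in nhds c, θ • X + θ' • B c' ∈ Ωt₁ := by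
      have : (fun c' => θ • X + θ' • B c') ⁻¹' Ωt₁ ∈ nhds c := by
        apply hG
        show Ωt₁ ∈ nhds (θ • X + θ' • B c)
        rw [hpe]
        exact htopen.mem_nhds hpt
      exact this
    have hev2 : ∀ᶠ c' in nhds c, c' ∈ Ioo a b := isOpen_Ioo.mem_nhds hc
    filter_upwards [hev1, hev2] with c' h1' h2'
    exact ⟨h2', θ • X + θ' • B c', h1', θ, θ', h0', h0'', hsum, rfl⟩
  -- disjointness
  have hlam : ∀ c : ℝ, c ∈ Ioo a b → 0 < (c - a)/(b - a) ∧ (c - a)/(b - a) < 1 := by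
    intro c hc
    constructor
    · apply div_pos; linarith [hc.1]; linarith
    · rw [div_lt_one hba]; linarith [hc.2]
  have hdisj : ∀ c, c ∈ U → c ∈ V → False := by
    rintro c ⟨hc, p, hpt, hpseg⟩ ⟨_, p', hp't, hp'seg⟩
    exact segJoin htconv (hlam c hc).1 (hlam c hc).2 (hcombo c hc) hpseg hp'seg hpt hp't hXt1
  -- U is empty near b
  have hsegdist : ∀ (Y : Euc 2) (p : Euc 2), p ∈ segment ℝ Y X → dist p X ≤ dist Y X := by
    rintro Y p ⟨θ, θ', h0', h0'', hsum, hpe⟩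
    have hpx : p - X = θ • (Y - X) := by
      have hθ' : θ' = 1 - θ := by linarith
      rw [← hpe, hθ']; module
    rw [dist_eq_norm, dist_eq_norm, hpx, norm_smul, Real.norm_eq_abs, abs_of_nonneg h0']
    have hθ1 : θ ≤ 1 := by linarith
    calc θ * ‖Y - X‖ ≤ 1 * ‖Y - X‖ := mul_le_mul_of_nonneg_right hθ1 (norm_nonneg _)
      _ = ‖Y - X‖ := one_mul _
  have hUb : ∃ ε > 0, ∀ c, c ∈ Ioo a b → b - ε < c → c ∉ U := by
    have hAb : Tendsto A (nhdsWithin b (Ioc a b)) (nhds X) := by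
      have := (hAcont b (right_mem_Ioc.2 hab)).tendsto
      have hAbX : A b = X := by rw [hXeq]
      rwa [hAbX] at this
    have hball : A ⁻¹' Metric.ball X δ ∈ nhdsWithin b (Ioc a b) :=
      hAb (Metric.ball_mem_nhds X hδ)
    obtain ⟨ε, hε, hsub⟩ := Metric.mem_nhdsWithin_iff.1 hball
    refine ⟨ε, hε, ?_⟩
    rintro c hc hcb ⟨_, p, hpt, hpseg⟩
    have hcball : c ∈ Metric.ball b ε ∩ Ioc a b := by
      constructor
      · rw [Metric.mem_ball, Real.dist_eq, abs_of_nonpos (by linarith [hc.2])]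
        linarith
      · exact ⟨hc.1, hc.2.le⟩
    have hAc : dist (A c) X < δ := hsub hcball
    have h1' : dist p X ≤ dist (A c) X := hsegdist (A c) p hpseg
    have h2' : δ ≤ dist X p := Metric.infDist_le_dist_of_mem (subset_closure hpt)
    rw [dist_comm] at h2'
    linarith
  -- V is empty near a
  have hVb : ∃ ε > 0, ∀ c, c ∈ Ioo a b → c < a + ε → c ∉ V := by
    have hBa : Tendsto B (nhdsWithin a (Ico a b)) (nhds X) := by
      have := (hBcont a (left_mem_Ico.2 hab)).tendsto
      have hBaX : B a = X := by
        rw [hXeq, hBdef]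
        simp only
        have hFa : F a = 0 := by
          rw [hFdef]
          simp only [Icc_self]
          rw [Measure.restrict_singleton]
          simp
        rw [hFa, sub_zero]
      rwa [hBaX] at this
    have hball : B ⁻¹' Metric.ball X δ ∈ nhdsWithin a (Ico a b) :=
      hBa (Metric.ball_mem_nhds X hδ)
    obtain ⟨ε, hε, hsub⟩ := Metric.mem_nhdsWithin_iff.1 hball
    refine ⟨ε, hε, ?_⟩
    rintro c hc hca ⟨_, p, hpt, hpseg⟩
    have hcball : c ∈ Metric.ball a ε ∩ Ico a b := by
      constructor
      · rw [Metric.mem_ball, Real.dist_eq, abs_of_nonneg (by linarith [hc.1])]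
        linarith
      · exact ⟨hc.1.le, hc.2⟩
    have hBc : dist (B c) X < δ := hsub hcball
    rw [segment_symm] at hpseg
    have h1' : dist p X ≤ dist (B c) X := hsegdist (B c) p hpseg
    have h2' : δ ≤ dist X p := Metric.infDist_le_dist_of_mem (subset_closure hpt)
    rw [dist_comm] at h2'
    linarith
  -- the Delta set and its basic properties
  have hSbdd : BddAbove {r : ℝ | ∃ y ∈ closure Ω₀ \ Ω₁, ∃ z ∈ closure Ωt₁,
      X ∈ segment ℝ y z ∧ r = max 1 (dist X y / dist X z)} :=
    deltaBdd Ω₀ Ω₁ Ωt₁ ⟨q0, hq0⟩ h0open h0conv h0line h1cl htconv htcl ht3 X hX0 hX1 htne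
  obtain ⟨z0, hz0⟩ := htne
  have honeS : (1:ℝ) ∈ {r : ℝ | ∃ y ∈ closure Ω₀ \ Ω₁, ∃ z ∈ closure Ωt₁,
      X ∈ segment ℝ y z ∧ r = max 1 (dist X y / dist X z)} := by
    refine ⟨X, ⟨hX0, hX1⟩, z0, hz0, left_mem_segment ℝ X z0, ?_⟩
    simp
  have hone_le : (1:ℝ) ≤ Delta (closure Ω₀ \ Ω₁) Ωt₁ X := le_csSup hSbdd honeS
  -- the common "good point" conclusion
  have hfinal : ∀ c, c ∈ Ioo a b → c ∉ U → c ∉ V →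
      segment ℝ (⨍ t in Set.Icc a c, φ t ∂volume) (⨍ t in Set.Icc c b, φ t ∂volume) ⊆
        closure Ω₀ \ Ωt₁ := by
    intro c hc hU hV
    rw [hAeq c hc.1 hc.2.le, hBeq c hc.1.le hc.2]
    intro p hp
    constructor
    · exact (h0conv.closure).segment_subset (hAmem c hc).1 (hBmem c hc).1 hp
    · intro hpt
      rcases segSplit (hlam c hc).1 (hlam c hc).2 (hcombo c hc) hp with h | h
      · exact hU ⟨hc, p, hpt, h⟩
      · exact hV ⟨hc, p, hpt, h⟩
  set c₀ : ℝ := (a + b)/2 with hc₀def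
  have hc₀ : c₀ ∈ Ioo a b := ⟨by simp only [hc₀def]; linarith, by simp only [hc₀def]; linarith⟩
  by_cases hU0 : c₀ ∈ U
  · -- move right from the midpoint
    obtain ⟨ε, hε, hnotU⟩ := hUb
    set T : Set ℝ := {c | c₀ ≤ c ∧ Icc c₀ c ⊆ U} with hTdef
    have hc₀T : c₀ ∈ T := by
      refine ⟨le_rfl, ?_⟩
      intro c hcI
      have : c = c₀ := le_antisymm hcI.2 hcI.1
      rwa [this]
    have hTub : ∀ c ∈ T, c ≤ b - ε := by
      rintro c ⟨h1', h2'⟩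
      by_contra hcon
      push_neg at hcon
      have hcU : c ∈ U := h2' ⟨h1', le_rfl⟩
      exact hnotU c hcU.1 hcon hcU
    have hTbdd : BddAbove T := ⟨b - ε, hTub⟩
    set cst : ℝ := sSup T with hcstdef
    have hc₀le : c₀ ≤ cst := le_csSup hTbdd hc₀T
    have hcstub : cst ≤ b - ε := csSup_le ⟨c₀, hc₀T⟩ hTub
    have hcstb : cst < b := by linarith
    have hcsta : a < cst := lt_of_lt_of_le hc₀.1 hc₀le
    have hcstIoo : cst ∈ Ioo a b := ⟨hcsta, hcstb⟩
    have hIco : Ico c₀ cst ⊆ U := by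
      rintro c ⟨h1', h2'⟩
      obtain ⟨c', hc'T, hcc'⟩ := exists_lt_of_lt_csSup ⟨c₀, hc₀T⟩ h2'
      exact hc'T.2 ⟨h1', hcc'.le⟩
    have hcstU : cst ∉ U := by
      intro hcU
      obtain ⟨ε', hε', hball⟩ := Metric.isOpen_iff.1 hUopen cst hcU
      have hc'T : cst + ε'/2 ∈ T := by
        refine ⟨by linarith, ?_⟩
        rintro c ⟨h1', h2'⟩
        rcases lt_or_ge c cst with h | h
        · exact hIco ⟨h1', h⟩
        · apply hball
          rw [Metric.mem_ball, Real.dist_eq, abs_of_nonneg (by linarith)]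
          linarith
      have := le_csSup hTbdd hc'T
      linarith [this]
    have hc₀lt : c₀ < cst := lt_of_le_of_ne hc₀le (fun h => hcstU (h ▸ hU0))
    have hcstV : cst ∉ V := by
      intro hcV
      obtain ⟨ε', hε', hball⟩ := Metric.isOpen_iff.1 hVopen cst hcV
      set c'' := max c₀ (cst - ε'/2) with hc''def
      have hc''U : c'' ∈ U := by
        apply hIco
        constructor
        · exact le_max_left _ _
        · apply max_lt hc₀lt; linarith
      have hc''le : c'' ≤ cst := max_le hc₀le (by linarith)
      have hc''ge : cst - ε'/2 ≤ c'' := le_max_right _ _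
      have hc''V : c'' ∈ V := by
        apply hball
        rw [Metric.mem_ball, Real.dist_eq, abs_of_nonpos (by linarith)]
        linarith
      exact hdisj c'' hc''U hc''V
    -- extract the witness on the A-side
    have hclos : cst ∈ closure (Ico c₀ cst) := by
      rw [closure_Ico hc₀lt.ne]
      exact ⟨hc₀le, le_rfl⟩
    obtain ⟨cs, hcsmem, hcslim⟩ := mem_closure_iff_seq_limit.1 hclos
    have hcsU : ∀ n, ∃ p ∈ Ωt₁, p ∈ segment ℝ (A (cs n)) X := by
      intro n
      obtain ⟨_, p, hpt, hpseg⟩ := hIco (hcsmem n)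
      exact ⟨p, hpt, hpseg⟩
    obtain ⟨z, hzc, hzseg⟩ := touchLimit (hAct cst hcstIoo) hcslim hcsU
    obtain ⟨hineq, hmemS⟩ := deltaWitness htcl (hlam cst hcstIoo).1 (hlam cst hcstIoo).2
      (hcombo cst hcstIoo) hzc hzseg (hBmem cst hcstIoo) hX1
    have hratio : (cst - a)/(b - cst) ≤ Delta (closure Ω₀ \ Ω₁) Ωt₁ X := by
      have e3 : ((cst - a)/(b - a)) / (1 - (cst - a)/(b - a)) = (cst - a)/(b - cst) := by
        have h1' : (1:ℝ) - (cst - a)/(b - a) = (b - cst)/(b - a) := by field_simp; all_goals ring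
        rw [h1']
        rw [div_div_div_cancel_right₀]
        · exact hba.ne'
      rw [← e3]
      exact le_trans hineq (le_csSup hSbdd hmemS)
    refine ⟨cst, hcsta, hcstb, hfinal cst hcstIoo hcstU hcstV, ?_⟩
    apply max_le
    · exact hratio
    · have h1' : (b - cst)/(cst - a) ≤ 1 := by
        rw [div_le_one (by linarith)]
        have : (a + b)/2 ≤ cst := hc₀le
        linarith
      exact le_trans h1' hone_le
  · by_cases hV0 : c₀ ∈ V
    · -- move left from the midpoint
      obtain ⟨ε, hε, hnotV⟩ := hVb
      set T : Set ℝ := {c | c ≤ c₀ ∧ Icc c c₀ ⊆ V} with hTdef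
      have hc₀T : c₀ ∈ T := by
        refine ⟨le_rfl, ?_⟩
        intro c hcI
        have : c = c₀ := le_antisymm hcI.2 hcI.1
        rwa [this]
      have hTlb : ∀ c ∈ T, a + ε ≤ c := by
        rintro c ⟨h1', h2'⟩
        by_contra hcon
        push_neg at hcon
        have hcV : c ∈ V := h2' ⟨le_rfl, h1'⟩
        exact hnotV c hcV.1 hcon hcV
      have hTbdd : BddBelow T := ⟨a + ε, hTlb⟩
      set cst : ℝ := sInf T with hcstdef
      have hc₀le : cst ≤ c₀ := csInf_le hTbdd hc₀T
      have hcstlb : a + ε ≤ cst := le_csInf ⟨c₀, hc₀T⟩ hTlb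
      have hcsta : a < cst := by linarith
      have hcstb : cst < b := lt_of_le_of_lt hc₀le hc₀.2
      have hcstIoo : cst ∈ Ioo a b := ⟨hcsta, hcstb⟩
      have hIoc : Ioc cst c₀ ⊆ V := by
        rintro c ⟨h1', h2'⟩
        obtain ⟨c', hc'T, hcc'⟩ := exists_lt_of_csInf_lt ⟨c₀, hc₀T⟩ h1'
        exact hc'T.2 ⟨hcc'.le, h2'⟩
      have hcstV : cst ∉ V := by
        intro hcV
        obtain ⟨ε', hε', hball⟩ := Metric.isOpen_iff.1 hVopen cst hcV
        have hc'T : cst - ε'/2 ∈ T := by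
          refine ⟨by linarith, ?_⟩
          rintro c ⟨h1', h2'⟩
          rcases lt_or_ge cst c with h | h
          · exact hIoc ⟨h, h2'⟩
          · apply hball
            rw [Metric.mem_ball, Real.dist_eq, abs_of_nonpos (by linarith)]
            linarith
        have := csInf_le hTbdd hc'T
        linarith [this]
      have hc₀lt : cst < c₀ := lt_of_le_of_ne hc₀le (fun h => hcstV (h ▸ hV0))
      have hcstU : cst ∉ U := by
        intro hcU
        obtain ⟨ε', hε', hball⟩ := Metric.isOpen_iff.1 hUopen cst hcU
        set c'' := min c₀ (cst + ε'/2) with hc''def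
        have hc''V : c'' ∈ V := by
          apply hIoc
          constructor
          · apply lt_min hc₀lt; linarith
          · exact min_le_left _ _
        have hc''ge : cst ≤ c'' := le_min hc₀le (by linarith)
        have hc''le : c'' ≤ cst + ε'/2 := min_le_right _ _
        have hc''U : c'' ∈ U := by
          apply hball
          rw [Metric.mem_ball, Real.dist_eq, abs_of_nonneg (by linarith)]
          linarith
        exact hdisj c'' hc''U hc''V
      -- extract the witness on the B-side
      have hclos : cst ∈ closure (Ioc cst c₀) := by
        rw [closure_Ioc hc₀lt.ne]
        exact ⟨le_rfl, hc₀le⟩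
      obtain ⟨cs, hcsmem, hcslim⟩ := mem_closure_iff_seq_limit.1 hclos
      have hcsV : ∀ n, ∃ p ∈ Ωt₁, p ∈ segment ℝ (B (cs n)) X := by
        intro n
        obtain ⟨_, p, hpt, hpseg⟩ := hIoc (hcsmem n)
        rw [segment_symm] at hpseg
        exact ⟨p, hpt, hpseg⟩
      obtain ⟨z, hzc, hzseg⟩ := touchLimit (hBct cst hcstIoo) hcslim hcsV
      -- apply the witness lemma with the roles of A and B exchanged
      have hlam' : 0 < (b - cst)/(b - a) ∧ (b - cst)/(b - a) < 1 := by
        constructor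
        · apply div_pos; linarith; linarith
        · rw [div_lt_one hba]; linarith
      have hcombo' : X = ((b - cst)/(b - a)) • B cst + (1 - (b - cst)/(b - a)) • A cst := by
        have e1 : (1:ℝ) - (b - cst)/(b - a) = (cst - a)/(b - a) := by field_simp; all_goals ring
        have e2 : (1:ℝ) - (cst - a)/(b - a) = (b - cst)/(b - a) := by field_simp; all_goals ring
        rw [e1, hcombo cst hcstIoo, e2]
        module
      obtain ⟨hineq, hmemS⟩ := deltaWitness htcl hlam'.1 hlam'.2
        hcombo' hzc hzseg (hAmem cst hcstIoo) hX1
      have hratio : (b - cst)/(cst - a) ≤ Delta (closure Ω₀ \ Ω₁) Ωt₁ X := by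
        have e3 : ((b - cst)/(b - a)) / (1 - (b - cst)/(b - a)) = (b - cst)/(cst - a) := by
          have h1' : (1:ℝ) - (b - cst)/(b - a) = (cst - a)/(b - a) := by field_simp; all_goals ring
          rw [h1']
          rw [div_div_div_cancel_right₀]
          · exact hba.ne'
        rw [← e3]
        exact le_trans hineq (le_csSup hSbdd hmemS)
      refine ⟨cst, hcsta, hcstb, hfinal cst hcstIoo hcstU hcstV, ?_⟩
      apply max_le
      · have h1' : (cst - a)/(b - cst) ≤ 1 := by
          rw [div_le_one (by linarith)]
          have : cst ≤ (a + b)/2 := hc₀le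
          linarith
        exact le_trans h1' hone_le
      · exact hratio
    · -- the midpoint works
      refine ⟨c₀, hc₀.1, hc₀.2, hfinal c₀ hc₀ hU0 hV0, ?_⟩
      have he : c₀ - a = b - c₀ := by rw [hc₀def]; ring
      have hpos : (0:ℝ) < b - c₀ := by linarith [hc₀.2]
      have h1' : (c₀ - a)/(b - c₀) = 1 := by rw [he, div_self hpos.ne']
      have h2' : (b - c₀)/(c₀ - a) = 1 := by rw [he, div_self hpos.ne']
      rw [h1', h2', max_self]
      exact hone_le
end
end
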